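/- arXiv:cs/0205041 — 4 statements merged into one kernel-verified Lean document; each statement's English description precedes it below -/
import Mathlib

section
/- If a nondegenerate pivot path p for shortest path tree T contains a cycle, then that cycle has zero cost at the pivot point λ', contains at least one parameterized edge, and hence has strictly negative cost in G_λ for every λ > λ'; consequently λ* = λ'. -/
variable {V : Type*}

/-- `IsWalkFrom E s t p` : `p` is a list of edges forming a walk from `s` to `t`
in the directed graph with edge relation `E`. -/
def IsWalkFrom (E : V → V → Prop) : V → V → List (V × V) → Prop
  | s, t, [] => s = t
  | s, t, e :: p => E e.1 e.2 ∧ e.1 = s ∧ IsWalkFrom E e.2 t p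

/-- Total cost of a walk. -/
def walkCost (c : V × V → ℝ) (p : List (V × V)) : ℝ := (p.map c).sum

/-- The graph has a negative-cost (directed) cycle. -/
def HasNegCycle (E : V → V → Prop) (c : V × V → ℝ) : Prop :=
  ∃ v p, p ≠ [] ∧ IsWalkFrom E v v p ∧ walkCost c p < 0

/-- `v` is reachable from `s`. -/
def Reaches (E : V → V → Prop) (s v : V) : Prop := ∃ p, IsWalkFrom E s v p

/-- Edge costs of `G_lam`: the parameter `lam` is subtracted from the cost of each
parameterized edge (edges in `E'`). -/
def paramCost (c : V × V → ℝ) (E' : V × V → Prop) [DecidablePred E'] (lam : ℝ) :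
    V × V → ℝ :=
  fun e => c e - lam * (if E' e then 1 else 0)

/-- Number of parameterized edges on a walk. -/
def paramCount (E' : V × V → Prop) [DecidablePred E'] (p : List (V × V)) : ℕ :=
  p.countP fun e => decide (E' e)

/-- `t` is a shortest path tree from `s`: it assigns to each vertex a walk from `s`
of minimum cost. -/
def IsSPTree (E : V → V → Prop) (c : V × V → ℝ) (s : V) (t : V → List (V × V)) : Prop :=
  ∀ v, IsWalkFrom E s v (t v) ∧ ∀ q, IsWalkFrom E s v q → walkCost c (t v) ≤ walkCost c q

/-- `p` is a pivot path for tree `t` at parameter value `lam'`: a shortest path in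
`G_lam'` from `s` to `v` with more parameterized edges than the tree path `t v`. -/
def IsPivotPath (E : V → V → Prop) (c : V × V → ℝ) (E' : V × V → Prop)
    [DecidablePred E'] (s : V) (t : V → List (V × V)) (lam' : ℝ)
    (v : V) (p : List (V × V)) : Prop :=
  IsWalkFrom E s v p ∧
  (∀ q, IsWalkFrom E s v q →
    walkCost (paramCost c E' lam') p ≤ walkCost (paramCost c E' lam') q) ∧
  paramCount E' (t v) < paramCount E' p

/-- `p` is nondegenerate: no proper prefix of `p` has fewer parameterized edges than
the corresponding tree path, and `p` contains no zero-cost cycle without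
parameterized edges. -/
def NondegeneratePath (E : V → V → Prop) (c : V × V → ℝ) (E' : V × V → Prop)
    [DecidablePred E'] (s : V) (t : V → List (V × V)) (lam' : ℝ)
    (p : List (V × V)) : Prop :=
  (∀ p₁ p₂ u, p = p₁ ++ p₂ → p₂ ≠ [] → IsWalkFrom E s u p₁ →
    paramCount E' (t u) ≤ paramCount E' p₁) ∧
  (∀ p₁ K p₂ u, p = p₁ ++ K ++ p₂ → K ≠ [] → IsWalkFrom E u u K →
    ¬ (walkCost (paramCost c E' lam') K = 0 ∧ paramCount E' K = 0))


theorem isWalkFrom_append {E : V → V → Prop} {p q : List (V × V)} :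
    ∀ {s t : V}, IsWalkFrom E s t (p ++ q) ↔ ∃ m, IsWalkFrom E s m p ∧ IsWalkFrom E m t q := by
  induction p with
  | nil =>
    intro s t
    constructor
    · intro h; exact ⟨s, rfl, h⟩
    · rintro ⟨m, rfl, h⟩; exact h
  | cons e p ih =>
    intro s t
    constructor
    · rintro ⟨he, rfl, h⟩
      obtain ⟨m, h1, h2⟩ := ih.mp h
      exact ⟨m, ⟨he, rfl, h1⟩, h2⟩
    · rintro ⟨m, ⟨he, rfl, h1⟩, h2⟩
      exact ⟨he, rfl, ih.mpr ⟨m, h1, h2⟩⟩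

theorem walk_end_unique {E : V → V → Prop} {p : List (V × V)} :
    ∀ {s t t' : V}, IsWalkFrom E s t p → IsWalkFrom E s t' p → t = t' := by
  induction p with
  | nil => intro s t t' h h'; exact h.symm.trans h'
  | cons e p ih => intro s t t' h h'; exact ih h.2.2 h'.2.2

theorem walkCost_append (c : V × V → ℝ) (p q : List (V × V)) :
    walkCost c (p ++ q) = walkCost c p + walkCost c q := by
  simp [walkCost]

theorem walkCost_param (c : V × V → ℝ) (E' : V × V → Prop) [DecidablePred E'] (lam μ : ℝ)
    (q : List (V × V)) :
    walkCost (paramCost c E' μ) q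
      = walkCost (paramCost c E' lam) q - (μ - lam) * paramCount E' q := by
  induction q with
  | nil => simp [walkCost, paramCount]
  | cons e q ih =>
    simp only [walkCost, List.map_cons, List.sum_cons, paramCount, List.countP_cons] at *
    by_cases h : E' e <;> simp [paramCost, h] at * <;> linarith

theorem walk_pow {E : V → V → Prop} {u : V} {K : List (V × V)} (h : IsWalkFrom E u u K) :
    ∀ n, IsWalkFrom E u u (List.flatten (List.replicate n K))
  | 0 => rfl
  | n + 1 => by
    rw [List.replicate_succ, List.flatten_cons]
    exact isWalkFrom_append.mpr ⟨u, h, walk_pow h n⟩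

theorem walkCost_pow (c : V × V → ℝ) (K : List (V × V)) (n : ℕ) :
    walkCost c (List.flatten (List.replicate n K)) = n * walkCost c K := by
  induction n with
  | zero => simp [walkCost]
  | succ n ih =>
    rw [List.replicate_succ, List.flatten_cons, walkCost_append, ih]
    push_cast; ring

theorem paramCount_append (E' : V × V → Prop) [DecidablePred E'] (p q : List (V × V)) :
    paramCount E' (p ++ q) = paramCount E' p + paramCount E' q := by
  simp [paramCount, List.countP_append]
/-- If a nondegenerate pivot path `p` for shortest path tree `t` at
pivot point `lam'` contains a cycle `K`, then `K` has zero cost in `G_lam'`,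
contains at least one parameterized edge, has strictly negative cost in `G_μ` for
every `μ > lam'`, and hence `lam* = lam'`, where `lam*` is the supremum of `μ` for
which `G_μ` has no negative-cost cycle. -/
theorem stmt7 [Fintype V] (E : V → V → Prop) (c : V × V → ℝ) (E' : V × V → Prop)
    [DecidablePred E'] (s : V) (t : V → List (V × V)) (lam' : ℝ) (v : V)
    (p : List (V × V))
    (hT : IsSPTree E (paramCost c E' lam') s t)
    (hpiv : IsPivotPath E c E' s t lam' v p)
    (hnd : NondegeneratePath E c E' s t lam' p)
    (p₁ K p₂ : List (V × V)) (u : V)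
    (hdecomp : p = p₁ ++ K ++ p₂) (hK : K ≠ []) (hKcyc : IsWalkFrom E u u K) :
    walkCost (paramCost c E' lam') K = 0 ∧
    1 ≤ paramCount E' K ∧
    (∀ μ > lam', walkCost (paramCost c E' μ) K < 0) ∧
    sSup {μ | ¬ HasNegCycle E (paramCost c E' μ)} = lam' := by

  obtain ⟨hpw, hpmin, hpcount⟩ := hpiv
  rw [hdecomp, List.append_assoc] at hpw
  obtain ⟨m, hw1, hw23⟩ := isWalkFrom_append.mp hpw
  obtain ⟨m2, hwK, hw2⟩ := isWalkFrom_append.mp hw23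
  have hm : m = u := by
    obtain ⟨e, K', rfl⟩ := List.exists_cons_of_ne_nil hK
    exact hwK.2.1.symm.trans hKcyc.2.1
  subst hm
  have hm2 : m2 = m := walk_end_unique hwK hKcyc
  subst hm2
  -- Step A : cost of K at lam' is ≤ 0
  have hq : IsWalkFrom E s v (p₁ ++ p₂) := isWalkFrom_append.mpr ⟨m2, hw1, hw2⟩
  have hA := hpmin _ hq
  rw [hdecomp, walkCost_append, walkCost_append, walkCost_append] at hA
  -- Step B : cost of K at lam' is ≥ 0
  have hB : 0 ≤ walkCost (paramCost c E' lam') K := by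
    by_contra hneg
    push_neg at hneg
    have hbd : ∀ n : ℕ, walkCost (paramCost c E' lam') (t v) ≤
        walkCost (paramCost c E' lam') p₁ + n * walkCost (paramCost c E' lam') K +
          walkCost (paramCost c E' lam') p₂ := by
      intro n
      have hqn : IsWalkFrom E s v (p₁ ++ (List.flatten (List.replicate n K) ++ p₂)) :=
        isWalkFrom_append.mpr ⟨m2, hw1,
          isWalkFrom_append.mpr ⟨m2, walk_pow hKcyc n, hw2⟩⟩
      have := (hT v).2 _ hqn
      rw [walkCost_append, walkCost_append, walkCost_pow] at this
      linarith
    obtain ⟨n, hn⟩ := exists_nat_gt ((walkCost (paramCost c E' lam') p₁ +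
      walkCost (paramCost c E' lam') p₂ - walkCost (paramCost c E' lam') (t v)) /
        (-walkCost (paramCost c E' lam') K))
    rw [div_lt_iff₀ (by linarith : (0:ℝ) < -walkCost (paramCost c E' lam') K)] at hn
    have := hbd n
    nlinarith
  have hzero : walkCost (paramCost c E' lam') K = 0 := le_antisymm (by linarith) hB
  have hcount : paramCount E' K ≠ 0 := fun h => hnd.2 p₁ K p₂ m2 hdecomp hK hKcyc ⟨hzero, h⟩
  have h1 : (1:ℝ) ≤ (paramCount E' K : ℝ) := by
    exact_mod_cast Nat.one_le_iff_ne_zero.mpr hcount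
  have hneg : ∀ μ > lam', walkCost (paramCost c E' μ) K < 0 := by
    intro μ hμ
    rw [walkCost_param c E' lam' μ K, hzero]
    nlinarith
  refine ⟨hzero, Nat.one_le_iff_ne_zero.mpr hcount, hneg, ?_⟩
  have hset : {μ | ¬ HasNegCycle E (paramCost c E' μ)} = Set.Iic lam' := by
    ext μ
    simp only [Set.mem_setOf_eq, Set.mem_Iic]
    constructor
    · intro h
      by_contra hlt
      push_neg at hlt
      exact h ⟨m2, K, hK, hKcyc, hneg μ hlt⟩
    · rintro hle ⟨w, C, hCne, hCw, hCneg⟩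
      have hcast : (0:ℝ) ≤ (paramCount E' C : ℝ) := Nat.cast_nonneg _
      have hCl : walkCost (paramCost c E' lam') C < 0 := by
        have := walkCost_param c E' μ lam' C
        nlinarith
      have hle2 := (hT w).2 (t w ++ C) (isWalkFrom_append.mpr ⟨w, (hT w).1, hCw⟩)
      rw [walkCost_append] at hle2
      linarith
  rw [hset]
  exact csSup_Iic
end

section
/- Let G be strongly connected, let C be a cycle in G^π all of whose edges have minimum cost λ* (with all other edge costs ≥ λ*), let H = G^π/C be the contraction of C to a single vertex v, and let β minimum-balance H. Then the potential α on G^π defined by α(w) = β(v) if w ∈ C and α(w) = β(w) otherwise, minimum-balances G^π; hence π + α minimum-balances G. -/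
/-- A directed multigraph on vertex set `V` with real edge costs: edges are indexed
by a type `ι`, with source, target and cost maps. -/
structure MGraph (V : Type) where
  ι : Type
  src : ι → V
  tgt : ι → V
  cost : ι → ℝ

namespace MGraph

variable {V : Type}

/-- `G.IsWalk s t p` : `p` is a list of edges forming a walk from `s` to `t`. -/
def IsWalk (G : MGraph V) : V → V → List G.ι → Prop
  | s, t, [] => s = t
  | s, t, e :: p => G.src e = s ∧ G.IsWalk (G.tgt e) t p

/-- Total cost of a walk. -/
def wcost (G : MGraph V) (p : List G.ι) : ℝ := (p.map G.cost).sum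

/-- The reweighting `G^π` of `G` under a potential `π`. -/
def reweight (G : MGraph V) (π : V → ℝ) : MGraph V :=
  ⟨G.ι, G.src, G.tgt, fun e => G.cost e + π (G.src e) - π (G.tgt e)⟩

/-- Contraction of `G` along a quotient map `q : V → V`: self-loops are deleted,
parallel edges are kept. -/
def contract (G : MGraph V) (q : V → V) : MGraph V :=
  ⟨{e : G.ι // q (G.src e) ≠ q (G.tgt e)}, fun e => q (G.src e.1),
    fun e => q (G.tgt e.1), fun e => G.cost e.1⟩

/-- `G` is strongly connected. -/
def StronglyConnected (G : MGraph V) : Prop := ∀ u v, ∃ p, G.IsWalk u v p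

/-- The potential `μ` minimum-balances `G`: in `G^μ`, for every proper nonempty
vertex subset `S`, the minimum cost among edges entering `S` equals the minimum cost
among edges leaving `S`. -/
def MinBalances (G : MGraph V) (μ : V → ℝ) : Prop :=
  ∀ S : Set V, S.Nonempty → S ≠ Set.univ →
    sInf {x | ∃ e, G.src e ∉ S ∧ G.tgt e ∈ S ∧
        x = G.cost e + μ (G.src e) - μ (G.tgt e)} =
      sInf {x | ∃ e, G.src e ∈ S ∧ G.tgt e ∉ S ∧
        x = G.cost e + μ (G.src e) - μ (G.tgt e)}

/- ### Walk lemmas -/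

theorem isWalk_append {G : MGraph V} {p q : List G.ι} {s m t : V}
    (h1 : G.IsWalk s m p) (h2 : G.IsWalk m t q) : G.IsWalk s t (p ++ q) := by
  induction p generalizing s with
  | nil => have h : s = m := h1; subst h; exact h2
  | cons e p ih => exact ⟨h1.1, ih h1.2⟩

theorem cross_in {G : MGraph V} (S : Set V) {p : List G.ι} :
    ∀ {s t : V}, G.IsWalk s t p → s ∉ S → t ∈ S →
      ∃ e ∈ p, G.src e ∉ S ∧ G.tgt e ∈ S := by
  induction p with
  | nil =>
    intro s t h hs ht
    have h' : s = t := h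
    exact absurd (h' ▸ ht) hs
  | cons e p ih =>
    intro s t h hs ht
    by_cases hm : G.tgt e ∈ S
    · exact ⟨e, List.mem_cons_self, by rw [h.1]; exact hs, hm⟩
    · obtain ⟨f, hf, h1, h2⟩ := ih h.2 hm ht
      exact ⟨f, List.mem_cons_of_mem _ hf, h1, h2⟩

theorem cross_out {G : MGraph V} (S : Set V) {p : List G.ι} :
    ∀ {s t : V}, G.IsWalk s t p → s ∈ S → t ∉ S →
      ∃ e ∈ p, G.src e ∈ S ∧ G.tgt e ∉ S := by
  induction p with
  | nil =>
    intro s t h hs ht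
    have h' : s = t := h
    exact absurd (h' ▸ hs) ht
  | cons e p ih =>
    intro s t h hs ht
    by_cases hm : G.tgt e ∈ S
    · obtain ⟨f, hf, h1, h2⟩ := ih h.2 hm ht
      exact ⟨f, List.mem_cons_of_mem _ hf, h1, h2⟩
    · exact ⟨e, List.mem_cons_self, by rw [h.1]; exact hs, hm⟩

theorem isWalk_split {G : MGraph V} {p : List G.ι} :
    ∀ {s t : V} {e : G.ι}, G.IsWalk s t p → e ∈ p →
      ∃ p₁ p₂, p = p₁ ++ e :: p₂ ∧ G.IsWalk s (G.src e) p₁ ∧ G.IsWalk (G.tgt e) t p₂ := by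
  induction p with
  | nil => intro s t e _ he; cases he
  | cons f p ih =>
    intro s t e h he
    rcases List.mem_cons.1 he with rfl | hmem
    · exact ⟨[], p, rfl, h.1.symm, h.2⟩
    · obtain ⟨p₁, p₂, hp, h1, h2⟩ := ih h.2 hmem
      exact ⟨f :: p₁, p₂, by rw [hp]; rfl, ⟨h.1, h1⟩, h2⟩

theorem walk_tgt_mem {G : MGraph V} {p : List G.ι} :
    ∀ {s t : V}, G.IsWalk s t p → ∀ e ∈ p, G.tgt e = t ∨ ∃ e' ∈ p, G.src e' = G.tgt e := by
  induction p with
  | nil => intro s t _ e he; cases he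
  | cons f p ih =>
    intro s t h e he
    rcases List.mem_cons.1 he with rfl | hmem
    · cases p with
      | nil => exact Or.inl h.2
      | cons g p' => exact Or.inr ⟨g, List.mem_cons_of_mem _ (List.mem_cons_self), h.2.1⟩
    · rcases ih h.2 e hmem with h1 | ⟨e', he', h2⟩
      · exact Or.inl h1
      · exact Or.inr ⟨e', List.mem_cons_of_mem _ he', h2⟩

theorem isWalk_reweight {G : MGraph V} {π : V → ℝ} {p : List G.ι} :
    ∀ {a b : V}, G.IsWalk a b p → (G.reweight π).IsWalk a b p := by
  induction p with
  | nil => exact fun h => h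
  | cons e p ih => exact fun h => ⟨h.1, ih h.2⟩

theorem contract_walk (G : MGraph V) (q : V → V) {p : List G.ι} :
    ∀ {a b : V}, G.IsWalk a b p → ∃ p', (G.contract q).IsWalk (q a) (q b) p' := by
  induction p with
  | nil =>
    intro a b h
    have h' : a = b := h
    subst h'
    exact ⟨[], rfl⟩
  | cons e p ih =>
    intro a b h
    obtain ⟨p', hp'⟩ := ih h.2
    by_cases hq : q (G.src e) = q (G.tgt e)
    · refine ⟨p', ?_⟩
      have h1 : q (G.tgt e) = q a := by rw [← h.1, ← hq]
      rwa [h1] at hp'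
    · refine ⟨⟨e, hq⟩ :: p', ?_, hp'⟩
      show q (G.src e) = q a
      rw [h.1]

/- ### The reweighted-cost machinery on an abstract graph -/

def gam (D : MGraph V) (β : V → ℝ) (e : D.ι) : ℝ :=
  D.cost e + β (D.src e) - β (D.tgt e)

def InS (D : MGraph V) (β : V → ℝ) (S : Set V) : Set ℝ :=
  {x | ∃ e, D.src e ∉ S ∧ D.tgt e ∈ S ∧ x = gam D β e}

def OutS (D : MGraph V) (β : V → ℝ) (S : Set V) : Set ℝ :=
  {x | ∃ e, D.src e ∈ S ∧ D.tgt e ∉ S ∧ x = gam D β e}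

theorem balance_eq {D : MGraph V} {β : V → ℝ} (hbal : D.MinBalances β) (S : Set V)
    (h1 : S.Nonempty) (h2 : S ≠ Set.univ) :
    sInf (InS D β S) = sInf (OutS D β S) := hbal S h1 h2

def WSet (D : MGraph V) (lam : ℝ) (β : V → ℝ) (u₀ : V) (v : V) : Set ℝ :=
  {x | ∃ p, D.IsWalk v u₀ p ∧ x = (p.map fun e => gam D β e - lam).sum}

noncomputable def Phi (D : MGraph V) (lam : ℝ) (β : V → ℝ) (u₀ : V) (v : V) : ℝ :=
  sInf (WSet D lam β u₀ v)

theorem sum_lb {D : MGraph V} {lam : ℝ} {β : V → ℝ} (hcost : ∀ e, lam ≤ D.cost e)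
    {p : List D.ι} : ∀ {v w : V}, D.IsWalk v w p →
      β v - β w ≤ (p.map fun e => gam D β e - lam).sum := by
  induction p with
  | nil =>
    intro v w h
    have h' : v = w := h
    subst h'
    simp
  | cons e p ih =>
    intro v w h
    have h3 := ih h.2
    have h4 := hcost e
    have h5 : gam D β e - lam = (D.cost e - lam) + (β (D.src e) - β (D.tgt e)) := by
      unfold gam; ring
    simp only [List.map_cons, List.sum_cons]
    rw [h5, h.1]
    linarith

theorem wset_bdd {D : MGraph V} {lam : ℝ} {β : V → ℝ} {u₀ : V}
    (hcost : ∀ e, lam ≤ D.cost e) (v : V) : BddBelow (WSet D lam β u₀ v) := by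
  refine ⟨β v - β u₀, ?_⟩
  rintro x ⟨p, hp, rfl⟩
  exact sum_lb hcost hp

theorem cert {D : MGraph V} {lam : ℝ} {β : V → ℝ} {u₀ : V}
    (hcost : ∀ e, lam ≤ D.cost e) (e : D.ι)
    (hw : ∃ p, D.IsWalk (D.tgt e) u₀ p) :
    Phi D lam β u₀ (D.src e) ≤ (gam D β e - lam) + Phi D lam β u₀ (D.tgt e) := by
  have hne : (WSet D lam β u₀ (D.tgt e)).Nonempty := by
    obtain ⟨p, hp⟩ := hw; exact ⟨_, p, hp, rfl⟩
  have key : ∀ x ∈ WSet D lam β u₀ (D.tgt e),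
      Phi D lam β u₀ (D.src e) - (gam D β e - lam) ≤ x := by
    rintro x ⟨p, hp, rfl⟩
    have hmem : (gam D β e - lam) + (p.map fun f => gam D β f - lam).sum
        ∈ WSet D lam β u₀ (D.src e) := ⟨e :: p, ⟨rfl, hp⟩, by simp⟩
    have h1 : Phi D lam β u₀ (D.src e)
        ≤ (gam D β e - lam) + (p.map fun f => gam D β f - lam).sum :=
      csInf_le (wset_bdd hcost _) hmem
    linarith
  have h2 : Phi D lam β u₀ (D.src e) - (gam D β e - lam) ≤ Phi D lam β u₀ (D.tgt e) :=
    le_csInf hne key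
  linarith

theorem cert' {D : MGraph V} {lam : ℝ} {β : V → ℝ} {u₀ : V}
    (hcost : ∀ e, lam ≤ D.cost e) (e : D.ι)
    (hw : ∃ p, D.IsWalk (D.tgt e) u₀ p) :
    lam + Phi D lam β u₀ (D.src e) - Phi D lam β u₀ (D.tgt e) ≤ gam D β e := by
  have := cert (β := β) hcost e hw
  linarith

theorem phi_mono {D : MGraph V} {lam : ℝ} {β : V → ℝ} {u₀ : V}
    (hcost : ∀ e, lam ≤ D.cost e) (e : D.ι)
    (hw : ∃ p, D.IsWalk (D.tgt e) u₀ p) (hch : gam D β e < lam) :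
    Phi D lam β u₀ (D.src e) < Phi D lam β u₀ (D.tgt e) := by
  have := cert (β := β) hcost e hw
  linarith

theorem lam_le_sInf {lam : ℝ} (hlam : lam ≤ 0) {s : Set ℝ} (h : ∀ x ∈ s, lam ≤ x) :
    lam ≤ sInf s := by
  rcases s.eq_empty_or_nonempty with rfl | hne
  · simpa [Real.sInf_empty] using hlam
  · exact le_csInf hne h


/- ### The key cut lemmas -/

theorem key1 {D : MGraph V} {lam : ℝ} {β : V → ℝ} {u₀ : V}
    (hcost : ∀ e, lam ≤ D.cost e)
    (hbase : ∀ a, (∃ e, D.src e = a ∨ D.tgt e = a) →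
      (∃ p, D.IsWalk a u₀ p) ∧ (∃ p, D.IsWalk u₀ a p))
    (hbal : D.MinBalances β)
    (e₀ : D.ι) (hch : gam D β e₀ < lam) (r : ℝ)
    (hr1 : Phi D lam β u₀ (D.src e₀) ≤ r) (hr2 : r < Phi D lam β u₀ (D.tgt e₀)) :
    ¬ BddBelow (InS D β {v | r < Phi D lam β u₀ v}) ∧ lam ≤ 0 := by
  set A : Set V := {v | r < Phi D lam β u₀ v} with hA
  have hs₀ : D.src e₀ ∉ A := not_lt.2 hr1
  have ht₀ : D.tgt e₀ ∈ A := hr2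
  have hmem : gam D β e₀ ∈ InS D β A := ⟨e₀, hs₀, ht₀, rfl⟩
  have houtlb : ∀ x ∈ OutS D β A, lam ≤ x := by
    rintro x ⟨f, hsf, htf, rfl⟩
    have h1 : r < Phi D lam β u₀ (D.src f) := hsf
    have h3 : Phi D lam β u₀ (D.tgt f) ≤ r := not_lt.1 htf
    have h4 := cert' (β := β) hcost f (hbase _ ⟨f, Or.inr rfl⟩).1
    linarith
  have houtne : (OutS D β A).Nonempty := by
    obtain ⟨p1, hp1⟩ := (hbase _ ⟨e₀, Or.inr rfl⟩).1
    obtain ⟨p2, hp2⟩ := (hbase _ ⟨e₀, Or.inl rfl⟩).2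
    obtain ⟨f, hf, h1, h2⟩ := cross_out A (isWalk_append hp1 hp2) ht₀ hs₀
    exact ⟨gam D β f, f, h1, h2, rfl⟩
  have hOge : lam ≤ sInf (OutS D β A) := le_csInf houtne houtlb
  have hbalA := balance_eq hbal A ⟨_, ht₀⟩ ((Set.ne_univ_iff_exists_notMem _).2 ⟨_, hs₀⟩)
  have hnb : ¬ BddBelow (InS D β A) := by
    intro hbdd
    have h5 : sInf (InS D β A) ≤ gam D β e₀ := csInf_le hbdd hmem
    rw [hbalA] at h5
    linarith
  refine ⟨hnb, ?_⟩
  have h6 : sInf (InS D β A) = 0 := Real.sInf_of_not_bddBelow hnb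
  rw [hbalA] at h6
  linarith

def SSet (D : MGraph V) (lam : ℝ) (β : V → ℝ) (u₀ : V) (e : D.ι) (r : ℝ) : Set V :=
  ({v | r < Phi D lam β u₀ v} ∪ {D.src e}) \ {D.tgt e}

theorem key2 {D : MGraph V} {lam : ℝ} {β : V → ℝ} {u₀ : V}
    (hcost : ∀ e, lam ≤ D.cost e)
    (hbase : ∀ a, (∃ e, D.src e = a ∨ D.tgt e = a) →
      (∃ p, D.IsWalk a u₀ p) ∧ (∃ p, D.IsWalk u₀ a p))
    (hbal : D.MinBalances β) (hlam : lam ≤ 0)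
    (e : D.ι) (hch : gam D β e < lam) (r : ℝ)
    (hr1 : Phi D lam β u₀ (D.src e) ≤ r) (hr2 : r < Phi D lam β u₀ (D.tgt e)) :
    BddBelow (InS D β (SSet D lam β u₀ e r)) := by
  have hst : D.src e ≠ D.tgt e := by
    intro h
    rw [h] at hr1
    exact absurd hr2 (not_lt.2 hr1)
  have hsrcSS : D.src e ∈ SSet D lam β u₀ e r := ⟨Or.inr rfl, hst⟩
  have htgtSS : D.tgt e ∉ SSet D lam β u₀ e r := fun h => h.2 rfl
  have hmemout : gam D β e ∈ OutS D β (SSet D lam β u₀ e r) := ⟨e, hsrcSS, htgtSS, rfl⟩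
  set Φ : V → ℝ := Phi D lam β u₀ with hΦ
  set m₀ : ℝ := min lam (min (lam + Φ (D.src e) - r)
      (lam + min r (Φ (D.src e)) - Φ (D.tgt e))) with hm₀
  have houtlb : ∀ x ∈ OutS D β (SSet D lam β u₀ e r), m₀ ≤ x := by
    rintro x ⟨f, hsf, htf, rfl⟩
    have hcf := cert' (β := β) hcost f (hbase _ ⟨f, Or.inr rfl⟩).1
    rw [← hΦ] at hcf
    obtain ⟨hsfu, hsfne⟩ := hsf
    have hsrc_lb : min r (Φ (D.src e)) ≤ Φ (D.src f) := by
      rcases hsfu with h | h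
      · exact le_trans (min_le_left _ _) (le_of_lt h)
      · rw [Set.mem_singleton_iff.1 h]
        exact min_le_right _ _
    by_cases htfe : D.tgt f = D.tgt e
    · rw [htfe] at hcf
      have h6 : lam + min r (Φ (D.src e)) - Φ (D.tgt e) ≤ gam D β f := by linarith
      exact le_trans (le_trans (min_le_right _ _) (min_le_right _ _)) h6
    · have htfu : D.tgt f ∉ ({v | r < Φ v} ∪ {D.src e}) := by
        intro hcontra
        exact htf ⟨hcontra, htfe⟩
      have h8 : Φ (D.tgt f) ≤ r := not_lt.1 fun hh => htfu (Or.inl hh)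
      rcases hsfu with h | h
      · have h9 : r < Φ (D.src f) := h
        have : lam ≤ gam D β f := by linarith
        exact le_trans (min_le_left _ _) this
      · have h10 : Φ (D.src f) = Φ (D.src e) := by rw [Set.mem_singleton_iff.1 h]
        rw [h10] at hcf
        have : lam + Φ (D.src e) - r ≤ gam D β f := by linarith
        exact le_trans (le_trans (min_le_right _ _) (min_le_left _ _)) this
  have h9 : sInf (OutS D β (SSet D lam β u₀ e r)) ≤ gam D β e :=
    csInf_le ⟨m₀, houtlb⟩ hmemout
  have hbalS := balance_eq hbal (SSet D lam β u₀ e r) ⟨_, hsrcSS⟩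
    ((Set.ne_univ_iff_exists_notMem _).2 ⟨_, htgtSS⟩)
  by_contra hnb
  have h10 : sInf (InS D β (SSet D lam β u₀ e r)) = 0 := Real.sInf_of_not_bddBelow hnb
  rw [h10] at hbalS
  linarith

theorem key3 {D : MGraph V} {lam : ℝ} {β : V → ℝ} {u₀ : V}
    (hcost : ∀ e, lam ≤ D.cost e)
    (hbase : ∀ a, (∃ e, D.src e = a ∨ D.tgt e = a) →
      (∃ p, D.IsWalk a u₀ p) ∧ (∃ p, D.IsWalk u₀ a p))
    (hbal : D.MinBalances β) (hlam : lam ≤ 0)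
    (p q : D.ι) (r : ℝ)
    (hpc : gam D β p < lam) (hqc : gam D β q < lam)
    (hp1 : Phi D lam β u₀ (D.src p) ≤ r) (hp2 : r < Phi D lam β u₀ (D.tgt p))
    (hq1 : Phi D lam β u₀ (D.src q) ≤ r) (hq2 : r < Phi D lam β u₀ (D.tgt q))
    (hss : D.src p ≠ D.src q) (htt : D.tgt p ≠ D.tgt q) : False := by
  set Φ : V → ℝ := Phi D lam β u₀ with hΦ
  set A : Set V := {v | r < Φ v} with hA
  obtain ⟨cp, hcp⟩ := key2 hcost hbase hbal hlam p hpc r hp1 hp2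
  obtain ⟨cq, hcq⟩ := key2 hcost hbase hbal hlam q hqc r hq1 hq2
  have hinq : ∀ f : D.ι, Φ (D.src f) ≤ r → r < Φ (D.tgt f) →
      D.src f ≠ D.src q → D.tgt f ≠ D.tgt q → cq ≤ gam D β f := by
    intro f h1 h2 h3 h4
    refine hcq ⟨f, ?_, ?_, rfl⟩
    · intro hc
      rcases hc.1 with hc1 | hc1
      · exact absurd hc1 (not_lt.2 h1)
      · exact h3 (Set.mem_singleton_iff.1 hc1)
    · exact ⟨Or.inl h2, h4⟩
  have hinp : ∀ f : D.ι, Φ (D.src f) ≤ r → r < Φ (D.tgt f) →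
      D.src f ≠ D.src p → D.tgt f ≠ D.tgt p → cp ≤ gam D β f := by
    intro f h1 h2 h3 h4
    refine hcp ⟨f, ?_, ?_, rfl⟩
    · intro hc
      rcases hc.1 with hc1 | hc1
      · exact absurd hc1 (not_lt.2 h1)
      · exact h3 (Set.mem_singleton_iff.1 hc1)
    · exact ⟨Or.inl h2, h4⟩
  set m₁ : ℝ := min (min cp cq)
      (min (lam + Φ (D.src q) - Φ (D.tgt p)) (lam + Φ (D.src p) - Φ (D.tgt q))) with hm₁
  have hinlb : ∀ x ∈ InS D β A, m₁ ≤ x := by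
    rintro x ⟨f, hsf, htf, rfl⟩
    have h8 : Φ (D.src f) ≤ r := not_lt.1 hsf
    have h9 : r < Φ (D.tgt f) := htf
    have hcf := cert' (β := β) hcost f (hbase _ ⟨f, Or.inr rfl⟩).1
    rw [← hΦ] at hcf
    by_cases h1 : D.tgt f = D.tgt p
    · by_cases h2 : D.src f = D.src q
      · rw [h1, h2] at hcf
        exact le_trans (le_trans (min_le_right _ _) (min_le_left _ _)) hcf
      · have := hinq f h8 h9 h2 (by rw [h1]; exact htt)
        exact le_trans (le_trans (min_le_left _ _) (min_le_right _ _)) this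
    · by_cases h2 : D.src f = D.src p
      · by_cases h3 : D.tgt f = D.tgt q
        · rw [h2, h3] at hcf
          exact le_trans (le_trans (min_le_right _ _) (min_le_right _ _)) hcf
        · have := hinq f h8 h9 (by rw [h2]; exact hss) h3
          exact le_trans (le_trans (min_le_left _ _) (min_le_right _ _)) this
      · have := hinp f h8 h9 h2 h1
        exact le_trans (le_trans (min_le_left _ _) (min_le_left _ _)) this
  have hpmem : gam D β p ∈ InS D β A := ⟨p, not_lt.2 hp1, hp2, rfl⟩
  have h20 : sInf (InS D β A) ≤ gam D β p := csInf_le ⟨m₁, hinlb⟩ hpmem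
  have houtlb : ∀ x ∈ OutS D β A, lam ≤ x := by
    rintro x ⟨f, hsf, htf, rfl⟩
    have h1 : r < Φ (D.src f) := hsf
    have h3 : Φ (D.tgt f) ≤ r := not_lt.1 htf
    have h4 := cert' (β := β) hcost f (hbase _ ⟨f, Or.inr rfl⟩).1
    rw [← hΦ] at h4
    linarith
  have hbalA := balance_eq hbal A ⟨_, hp2⟩ ((Set.ne_univ_iff_exists_notMem _).2
    ⟨_, (not_lt.2 hp1 : ¬ r < Φ (D.src p))⟩)
  have h21 : lam ≤ sInf (OutS D β A) := lam_le_sInf hlam houtlb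
  rw [← hbalA] at h21
  linarith


/- ### The main lower bound theorem for balanced reweightings -/

theorem star {D : MGraph V} {lam : ℝ} {β : V → ℝ} {u₀ : V}
    (hcost : ∀ e, lam ≤ D.cost e)
    (hbase : ∀ a, (∃ e, D.src e = a ∨ D.tgt e = a) →
      (∃ p, D.IsWalk a u₀ p) ∧ (∃ p, D.IsWalk u₀ a p))
    (hbal : D.MinBalances β) :
    ∀ e, lam ≤ D.cost e + β (D.src e) - β (D.tgt e) := by
  by_contra hcon
  push_neg at hcon
  obtain ⟨e₀, he₀⟩ := hcon
  have hch : gam D β e₀ < lam := he₀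
  set Φ : V → ℝ := Phi D lam β u₀ with hΦ
  have hmono : ∀ f : D.ι, gam D β f < lam → Φ (D.src f) < Φ (D.tgt f) := by
    intro f hf
    have := phi_mono (β := β) hcost f (hbase _ ⟨f, Or.inr rfl⟩).1 hf
    rw [← hΦ] at this; exact this
  have hcert : ∀ f : D.ι, lam + Φ (D.src f) - Φ (D.tgt f) ≤ gam D β f := by
    intro f
    have := cert' (β := β) hcost f (hbase _ ⟨f, Or.inr rfl⟩).1
    rw [← hΦ] at this; exact this
  have hlt : Φ (D.src e₀) < Φ (D.tgt e₀) := hmono e₀ hch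
  set r : ℝ := (Φ (D.src e₀) + Φ (D.tgt e₀)) / 2 with hr
  have hr1 : Φ (D.src e₀) ≤ r := by rw [hr]; linarith
  have hr2 : r < Φ (D.tgt e₀) := by rw [hr]; linarith
  obtain ⟨hnb, hlam⟩ := key1 hcost hbase hbal e₀ hch r hr1 hr2
  have hSP : ∀ N : ℝ, ∃ f : D.ι, gam D β f < N ∧ gam D β f < lam ∧
      Φ (D.src f) ≤ r ∧ r < Φ (D.tgt f) := by
    intro N
    obtain ⟨y, hy, hylt⟩ := not_bddBelow_iff.1 hnb (min N lam)
    obtain ⟨f, hsf, htf, rfl⟩ := hy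
    exact ⟨f, lt_of_lt_of_le hylt (min_le_left _ _), lt_of_lt_of_le hylt (min_le_right _ _),
      not_lt.1 hsf, htf⟩
  by_cases hpq : ∃ f g : D.ι,
      (gam D β f < lam ∧ Φ (D.src f) ≤ r ∧ r < Φ (D.tgt f)) ∧
      (gam D β g < lam ∧ Φ (D.src g) ≤ r ∧ r < Φ (D.tgt g)) ∧
      D.src f ≠ D.src g ∧ D.tgt f ≠ D.tgt g
  · obtain ⟨f, g, ⟨hf1, hf2, hf3⟩, ⟨hg1, hg2, hg3⟩, h4, h5⟩ := hpq
    exact key3 hcost hbase hbal hlam f g r hf1 hg1 hf2 hf3 hg2 hg3 h4 h5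
  · have hshare : ∀ f : D.ι, gam D β f < lam → Φ (D.src f) ≤ r → r < Φ (D.tgt f) →
        D.src f = D.src e₀ ∨ D.tgt f = D.tgt e₀ := by
      intro f h1 h2 h3
      by_contra hc
      push_neg at hc
      exact hpq ⟨f, e₀, ⟨h1, h2, h3⟩, ⟨hch, hr1, hr2⟩, hc.1, hc.2⟩
    by_cases hT : ∀ N : ℝ, ∃ f : D.ι, gam D β f < N ∧ gam D β f < lam ∧
        Φ (D.src f) ≤ r ∧ r < Φ (D.tgt f) ∧ D.tgt f = D.tgt e₀
    · -- common-target branch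
      set t₀ := D.tgt e₀ with ht₀def
      have hlow : ∀ M : ℝ, ∃ f : D.ι, gam D β f < lam ∧ Φ (D.src f) ≤ r ∧
          r < Φ (D.tgt f) ∧ D.tgt f = t₀ ∧ Φ (D.src f) < M := by
        intro M
        obtain ⟨f, hfN, hf1, hf2, hf3, hf4⟩ := hT (min lam (lam + M - Φ t₀))
        refine ⟨f, hf1, hf2, hf3, hf4, ?_⟩
        have h5 := hcert f
        rw [hf4] at h5
        have h6 : gam D β f < lam + M - Φ t₀ := lt_of_lt_of_le hfN (min_le_right _ _)
        linarith
      obtain ⟨g₀, hga, hgb, hgc, hgd, hge⟩ := hT lam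
      set z := D.src g₀ with hzdef
      have hzr : Φ z ≤ r := hgc
      have hΦt₀ : r < Φ t₀ := by rw [← hge]; exact hgd
      have hzt : z ≠ t₀ := by
        intro h
        rw [h] at hzr
        exact absurd hΦt₀ (not_lt.2 hzr)
      have c1 : ∀ h : D.ι, gam D β h < lam → D.tgt h = z → False := by
        intro h hhc hhz
        have hwz : Φ (D.src h) < Φ z := by
          have := hmono h hhc; rwa [hhz] at this
        obtain ⟨g', hg'1, hg'2, hg'3, hg'4, hg'5⟩ := hlow (Φ (D.src h))
        refine key3 hcost hbase hbal hlam h g' (Φ (D.src h)) hhc hg'1 le_rfl ?_ ?_ ?_ ?_ ?_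
        · rw [hhz]; exact hwz
        · exact le_of_lt hg'5
        · rw [hg'4]; linarith
        · intro hq; rw [hq] at hg'5; exact lt_irrefl _ hg'5
        · rw [hhz, hg'4]; exact hzt
      have c2 : ∀ h : D.ι, gam D β h < lam → D.src h = z → D.tgt h = t₀ := by
        intro h hhc hhz
        by_contra hy
        obtain ⟨g', hg'1, hg'2, hg'3, hg'4, hg'5⟩ := hlow (Φ z)
        refine key3 hcost hbase hbal hlam h g' (Φ z) hhc hg'1 ?_ ?_ ?_ ?_ ?_ ?_
        · exact le_of_eq (congrArg Φ hhz)
        · have := hmono h hhc; rwa [hhz] at this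
        · exact le_of_lt hg'5
        · rw [hg'4]; linarith
        · intro hq; rw [hhz] at hq; rw [hq] at hg'5; exact lt_irrefl _ hg'5
        · intro hq; rw [hg'4] at hq; exact hy hq
      have hInlb : ∀ x ∈ InS D β {z}, lam ≤ x := by
        rintro x ⟨f, hsf, htf, rfl⟩
        by_contra hlt'
        push_neg at hlt'
        exact c1 f hlt' (Set.mem_singleton_iff.1 htf)
      have hOutlb : ∀ x ∈ OutS D β {z}, min lam (lam + Φ z - Φ t₀) ≤ x := by
        rintro x ⟨f, hsf, htf, rfl⟩
        by_cases hc : gam D β f < lam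
        · have h1 := c2 f hc (Set.mem_singleton_iff.1 hsf)
          have h2 := hcert f
          rw [Set.mem_singleton_iff.1 hsf, h1] at h2
          exact le_trans (min_le_right _ _) (by linarith)
        · exact le_trans (min_le_left _ _) (not_lt.1 hc)
      have hg₀Out : gam D β g₀ ∈ OutS D β {z} := by
        refine ⟨g₀, rfl, ?_, rfl⟩
        rw [hge]
        exact fun hm => hzt (Set.mem_singleton_iff.1 hm).symm
      have hbalz := balance_eq hbal {z} ⟨z, rfl⟩
        ((Set.ne_univ_iff_exists_notMem _).2
          ⟨t₀, fun hm => hzt (Set.mem_singleton_iff.1 hm).symm⟩)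
      have h30 : lam ≤ sInf (InS D β {z}) := lam_le_sInf hlam hInlb
      have h31 : sInf (OutS D β {z}) ≤ gam D β g₀ := csInf_le ⟨_, hOutlb⟩ hg₀Out
      rw [hbalz] at h30
      linarith
    · -- common-source branch
      have hN₀ := not_forall.1 hT
      obtain ⟨N₀, hN₀⟩ := hN₀
      have hS : ∀ N : ℝ, ∃ f : D.ι, gam D β f < N ∧ gam D β f < lam ∧
          Φ (D.src f) ≤ r ∧ r < Φ (D.tgt f) ∧ D.src f = D.src e₀ := by
        intro N
        obtain ⟨f, h1, h2, h3, h4⟩ := hSP (min N N₀)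
        have hN : gam D β f < N := lt_of_lt_of_le h1 (min_le_left _ _)
        have hN0 : gam D β f < N₀ := lt_of_lt_of_le h1 (min_le_right _ _)
        rcases hshare f h2 h3 h4 with h5 | h5
        · exact ⟨f, hN, h2, h3, h4, h5⟩
        · exact absurd ⟨f, hN0, h2, h3, h4, h5⟩ hN₀
      set s₀ := D.src e₀ with hs₀def
      have hhigh : ∀ M : ℝ, ∃ f : D.ι, gam D β f < lam ∧ Φ (D.src f) ≤ r ∧
          r < Φ (D.tgt f) ∧ D.src f = s₀ ∧ M < Φ (D.tgt f) := by
        intro M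
        obtain ⟨f, hfN, h1, h2, h3, h4⟩ := hS (min lam (lam + Φ s₀ - M))
        refine ⟨f, h1, h2, h3, h4, ?_⟩
        have h5 := hcert f
        rw [h4] at h5
        have h6 : gam D β f < lam + Φ s₀ - M := lt_of_lt_of_le hfN (min_le_right _ _)
        linarith
      obtain ⟨g₀, hga, hgb, hgc, hgd, hge⟩ := hS lam
      set z := D.tgt g₀ with hzdef
      have hzr : r < Φ z := hgd
      have hΦs₀ : Φ s₀ ≤ r := by rw [← hge]; exact hgc
      have hzs : z ≠ s₀ := by
        intro h
        rw [h] at hzr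
        exact absurd hzr (not_lt.2 hΦs₀)
      have c1' : ∀ h : D.ι, gam D β h < lam → D.src h = z → False := by
        intro h hhc hhz
        have hzy : Φ z < Φ (D.tgt h) := by
          have := hmono h hhc; rwa [hhz] at this
        obtain ⟨g', hg'1, hg'2, hg'3, hg'4, hg'5⟩ := hhigh (Φ (D.tgt h))
        refine key3 hcost hbase hbal hlam h g' (Φ z) hhc hg'1 ?_ ?_ ?_ ?_ ?_ ?_
        · exact le_of_eq (congrArg Φ hhz)
        · exact hzy
        · rw [hg'4]; linarith
        · linarith
        · rw [hhz, hg'4]; exact hzs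
        · intro hq; rw [hq] at hg'5; exact lt_irrefl _ hg'5
      have c2' : ∀ h : D.ι, gam D β h < lam → D.tgt h = z → D.src h = s₀ := by
        intro h hhc hhz
        by_contra hw
        obtain ⟨g', hg'1, hg'2, hg'3, hg'4, hg'5⟩ := hhigh (Φ z)
        have hwhz : Φ (D.src h) < Φ z := by
          have := hmono h hhc; rwa [hhz] at this
        refine key3 hcost hbase hbal hlam h g'
          (max (Φ (D.src h)) (Φ s₀)) hhc hg'1 ?_ ?_ ?_ ?_ ?_ ?_
        · exact le_max_left _ _
        · rw [hhz]; exact max_lt hwhz (lt_of_le_of_lt hΦs₀ hzr)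
        · rw [hg'4]; exact le_max_right _ _
        · exact max_lt (by linarith) (by linarith)
        · intro hq; rw [hg'4] at hq; exact hw hq
        · intro hq; rw [hhz] at hq; rw [hq] at hg'5; exact lt_irrefl _ hg'5
      have hOutlb : ∀ x ∈ OutS D β {z}, lam ≤ x := by
        rintro x ⟨f, hsf, htf, rfl⟩
        by_contra hlt'
        push_neg at hlt'
        exact c1' f hlt' (Set.mem_singleton_iff.1 hsf)
      have hInlb : ∀ x ∈ InS D β {z}, min lam (lam + Φ s₀ - Φ z) ≤ x := by
        rintro x ⟨f, hsf, htf, rfl⟩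
        by_cases hc : gam D β f < lam
        · have h1 := c2' f hc (Set.mem_singleton_iff.1 htf)
          have h2 := hcert f
          rw [Set.mem_singleton_iff.1 htf, h1] at h2
          exact le_trans (min_le_right _ _) (by linarith)
        · exact le_trans (min_le_left _ _) (not_lt.1 hc)
      have hg₀In : gam D β g₀ ∈ InS D β {z} := by
        refine ⟨g₀, ?_, rfl, rfl⟩
        rw [hge]
        exact fun hm => hzs (Set.mem_singleton_iff.1 hm).symm
      have hbalz := balance_eq hbal {z} ⟨z, rfl⟩
        ((Set.ne_univ_iff_exists_notMem _).2
          ⟨s₀, fun hm => hzs (Set.mem_singleton_iff.1 hm).symm⟩)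
      have h30 : lam ≤ sInf (OutS D β {z}) := lam_le_sInf hlam hOutlb
      have h31 : sInf (InS D β {z}) ≤ gam D β g₀ := csInf_le ⟨_, hInlb⟩ hg₀In
      rw [hbalz] at h31
      linarith


theorem sInf_eq_of_mem_of_lb {s : Set ℝ} {a : ℝ} (hm : a ∈ s) (hl : ∀ x ∈ s, a ≤ x) :
    sInf s = a :=
  le_antisymm (csInf_le ⟨a, hl⟩ hm) (le_csInf ⟨a, hm⟩ hl)


end MGraph

open MGraph

/-- Let `G` be strongly connected, `C` a cycle in `G^π` all of whose
edges have minimum cost `lam*` (all other edge costs being `≥ lam*`), let `H` be the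
contraction of `G^π` along `C` (collapsing the vertex set `VC` of `C` to `u₀`), and
let `β` minimum-balance `H`. Then the potential `α` with `α w = β u₀` for `w` on `C`
and `α w = β w` otherwise minimum-balances `G^π`; hence `π + α` minimum-balances
`G`. -/
theorem stmt13 {V : Type} (G : MGraph V) (π : V → ℝ) (lamstar : ℝ)
    (hsc : G.StronglyConnected)
    (C : List (G.reweight π).ι) (u₀ : V) (hC : C ≠ [])
    (hcyc : (G.reweight π).IsWalk u₀ u₀ C)
    (hCmin : ∀ e ∈ C, (G.reweight π).cost e = lamstar)
    (hall : ∀ e, lamstar ≤ (G.reweight π).cost e)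
    (VC : Set V) [DecidablePred (· ∈ VC)]
    (hVC : VC = {w | ∃ e ∈ C, (G.reweight π).src e = w})
    (q : V → V) (hq : ∀ w, q w = if w ∈ VC then u₀ else w)
    (β : V → ℝ)
    (hβ : ((G.reweight π).contract q).MinBalances β) :
    (G.reweight π).MinBalances (fun w => if w ∈ VC then β u₀ else β w) ∧
    G.MinBalances (fun w => π w + if w ∈ VC then β u₀ else β w) := by

  classical
  have hu₀VC : u₀ ∈ VC := by
    cases C with
    | nil => exact absurd rfl hC
    | cons c rest =>
      rw [hVC]
      exact ⟨c, List.mem_cons_self, hcyc.1⟩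
  have hqu₀ : q u₀ = u₀ := by
    rw [hq]; split <;> rfl
  have halph : ∀ w, (if w ∈ VC then β u₀ else β w) = β (q w) := by
    intro w
    rw [hq]
    by_cases h : w ∈ VC <;> simp [h]
  have hCsrc : ∀ e ∈ C, (G.reweight π).src e ∈ VC := by
    intro e he
    rw [hVC]
    exact ⟨e, he, rfl⟩
  have hCtgt : ∀ e ∈ C, (G.reweight π).tgt e ∈ VC := by
    intro e he
    rcases walk_tgt_mem hcyc e he with h | ⟨e', he', h⟩
    · rw [h]; exact hu₀VC
    · rw [← h]; exact hCsrc e' he'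
  have hstar : ∀ e : ((G.reweight π).contract q).ι,
      lamstar ≤ ((G.reweight π).contract q).cost e
        + β (((G.reweight π).contract q).src e)
        - β (((G.reweight π).contract q).tgt e) := by
    apply MGraph.star
    · exact fun e => hall e.1
    · rintro a ⟨e, he⟩
      have hx : ∃ x : V, q x = a := by
        rcases he with h | h
        · exact ⟨(G.reweight π).src e.1, h⟩
        · exact ⟨(G.reweight π).tgt e.1, h⟩
      obtain ⟨x, rfl⟩ := hx
      constructor
      · obtain ⟨p, hp⟩ := hsc x u₀
        obtain ⟨p', hp'⟩ := contract_walk (G.reweight π) q (isWalk_reweight hp)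
        rw [hqu₀] at hp'
        exact ⟨p', hp'⟩
      · obtain ⟨p, hp⟩ := hsc u₀ x
        obtain ⟨p', hp'⟩ := contract_walk (G.reweight π) q (isWalk_reweight hp)
        rw [hqu₀] at hp'
        exact ⟨p', hp'⟩
    · exact hβ
  have hvc_walk : ∀ w w', w ∈ VC → w' ∈ VC →
      ∃ p, (G.reweight π).IsWalk w w' p ∧ ∀ e ∈ p, e ∈ C := by
    intro w w' hw hw'
    rw [hVC] at hw hw'
    obtain ⟨ew, hewC, hews⟩ := hw
    obtain ⟨ew', hew'C, hew's⟩ := hw'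
    obtain ⟨A, B, hAB, hA, hB⟩ := isWalk_split hcyc hewC
    obtain ⟨A', B', hAB', hA', hB'⟩ := isWalk_split hcyc hew'C
    have hw1 : (G.reweight π).IsWalk w u₀ (ew :: B) := ⟨hews, hB⟩
    have hw2 : (G.reweight π).IsWalk w w' ((ew :: B) ++ A') := by
      have := isWalk_append hw1 hA'
      rwa [hew's] at this
    refine ⟨(ew :: B) ++ A', hw2, ?_⟩
    intro e he
    rcases List.mem_append.1 he with h | h
    · rcases List.mem_cons.1 h with rfl | h
      · exact hewC
      · rw [hAB]
        exact List.mem_append.2 (Or.inr (List.mem_cons_of_mem _ h))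
    · rw [hAB']
      exact List.mem_append.2 (Or.inl h)
  have goal1 : (G.reweight π).MinBalances (fun w => if w ∈ VC then β u₀ else β w) := by
    intro S h1 h2
    set α : V → ℝ := fun w => if w ∈ VC then β u₀ else β w with hα
    have halphα : ∀ w, α w = β (q w) := by
      intro w
      rw [hα]
      exact halph w
    have hedge : ∀ e : G.ι, lamstar ≤ (G.reweight π).cost e
        + α ((G.reweight π).src e) - α ((G.reweight π).tgt e) := by
      intro e
      rw [halphα ((G.reweight π).src e), halphα ((G.reweight π).tgt e)]
      by_cases hqq : q ((G.reweight π).src e) = q ((G.reweight π).tgt e)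
      · rw [hqq]
        have h3 := hall e
        linarith
      · exact hstar ⟨e, hqq⟩
    have hbalcase : (∀ w ∈ VC, (w ∈ S ↔ u₀ ∈ S)) →
        sInf {x | ∃ e, (G.reweight π).src e ∉ S ∧ (G.reweight π).tgt e ∈ S ∧
          x = (G.reweight π).cost e + α ((G.reweight π).src e) - α ((G.reweight π).tgt e)}
        = sInf {x | ∃ e, (G.reweight π).src e ∈ S ∧ (G.reweight π).tgt e ∉ S ∧
          x = (G.reweight π).cost e + α ((G.reweight π).src e) - α ((G.reweight π).tgt e)} := by
      intro hcoh
      have hmq : ∀ v : V, v ∈ S → q v ∈ S := by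
        intro v hv
        rw [hq]
        by_cases h : v ∈ VC
        · rw [if_pos h]; exact (hcoh _ h).1 hv
        · rw [if_neg h]; exact hv
      have hmq' : ∀ v : V, v ∉ S → q v ∉ S := by
        intro v hv
        rw [hq]
        by_cases h : v ∈ VC
        · rw [if_pos h]; intro hu; exact hv ((hcoh _ h).2 hu)
        · rw [if_neg h]; exact hv
      have hqm : ∀ v : V, q v ∈ S → v ∈ S := by
        intro v hv
        by_cases h : v ∈ VC
        · rw [hq, if_pos h] at hv; exact (hcoh _ h).2 hv
        · rw [hq, if_neg h] at hv; exact hv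
      have hqm' : ∀ v : V, q v ∉ S → v ∉ S := fun v hv hm => hv (hmq v hm)
      have hEqIn : {x | ∃ e, (G.reweight π).src e ∉ S ∧ (G.reweight π).tgt e ∈ S ∧
          x = (G.reweight π).cost e + α ((G.reweight π).src e) - α ((G.reweight π).tgt e)}
          = InS ((G.reweight π).contract q) β S := by
        ext x
        constructor
        · rintro ⟨e, hs, ht, rfl⟩
          refine ⟨⟨e, ?_⟩, hmq' _ hs, hmq _ ht, ?_⟩
          · intro hqe
            exact hmq' _ hs (by rw [hqe]; exact hmq _ ht)
          · rw [halphα ((G.reweight π).src e), halphα ((G.reweight π).tgt e)]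
            rfl
        · rintro ⟨⟨e, hne⟩, hs, ht, rfl⟩
          refine ⟨e, hqm' _ hs, hqm _ ht, ?_⟩
          rw [halphα ((G.reweight π).src e), halphα ((G.reweight π).tgt e)]
          rfl
      have hEqOut : {x | ∃ e, (G.reweight π).src e ∈ S ∧ (G.reweight π).tgt e ∉ S ∧
          x = (G.reweight π).cost e + α ((G.reweight π).src e) - α ((G.reweight π).tgt e)}
          = OutS ((G.reweight π).contract q) β S := by
        ext x
        constructor
        · rintro ⟨e, hs, ht, rfl⟩
          refine ⟨⟨e, ?_⟩, hmq _ hs, hmq' _ ht, ?_⟩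
          · intro hqe
            exact hmq' _ ht (by rw [← hqe]; exact hmq _ hs)
          · rw [halphα ((G.reweight π).src e), halphα ((G.reweight π).tgt e)]
            rfl
        · rintro ⟨⟨e, hne⟩, hs, ht, rfl⟩
          refine ⟨e, hqm _ hs, hqm' _ ht, ?_⟩
          rw [halphα ((G.reweight π).src e), halphα ((G.reweight π).tgt e)]
          rfl
      rw [hEqIn, hEqOut]
      exact balance_eq hβ S h1 h2
    by_cases hin : ∃ w, w ∈ VC ∧ w ∈ S
    · by_cases hout : ∃ w, w ∈ VC ∧ w ∉ S
      · obtain ⟨w₁, hw₁VC, hw₁S⟩ := hin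
        obtain ⟨w₂, hw₂VC, hw₂S⟩ := hout
        obtain ⟨pin, hpin, hpinC⟩ := hvc_walk w₂ w₁ hw₂VC hw₁VC
        obtain ⟨ein, heinP, heins, heint⟩ := cross_in S hpin hw₂S hw₁S
        obtain ⟨pout, hpout, hpoutC⟩ := hvc_walk w₁ w₂ hw₁VC hw₂VC
        obtain ⟨eout, heoutP, heouts, heoutt⟩ := cross_out S hpout hw₁S hw₂S
        have hval : ∀ e ∈ C, (G.reweight π).cost e
            + α ((G.reweight π).src e) - α ((G.reweight π).tgt e) = lamstar := by
          intro e he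
          have hs := hCsrc e he
          have ht := hCtgt e he
          have hv1 : α ((G.reweight π).src e) = β u₀ := by rw [hα]; exact if_pos hs
          have hv2 : α ((G.reweight π).tgt e) = β u₀ := by rw [hα]; exact if_pos ht
          rw [hv1, hv2, hCmin e he]
          ring
        refine (sInf_eq_of_mem_of_lb (a := lamstar) ?_ ?_).trans
          (sInf_eq_of_mem_of_lb (a := lamstar) ?_ ?_).symm
        · exact ⟨ein, heins, heint, (hval ein (hpinC ein heinP)).symm⟩
        · rintro x ⟨e, -, -, rfl⟩
          exact hedge e
        · exact ⟨eout, heouts, heoutt, (hval eout (hpoutC eout heoutP)).symm⟩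
        · rintro x ⟨e, -, -, rfl⟩
          exact hedge e
      · push_neg at hout
        exact hbalcase fun w hw => ⟨fun _ => hout u₀ hu₀VC, fun _ => hout w hw⟩
    · push_neg at hin
      exact hbalcase fun w hw =>
        ⟨fun hws => absurd hws (hin w hw), fun hu => absurd hu (hin u₀ hu₀VC)⟩
  refine ⟨goal1, ?_⟩
  intro S h1 h2
  have hIn : {x | ∃ e, G.src e ∉ S ∧ G.tgt e ∈ S ∧
      x = G.cost e + (fun w => π w + if w ∈ VC then β u₀ else β w) (G.src e)
        - (fun w => π w + if w ∈ VC then β u₀ else β w) (G.tgt e)}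
      = {x | ∃ e, (G.reweight π).src e ∉ S ∧ (G.reweight π).tgt e ∈ S ∧
        x = (G.reweight π).cost e
          + (fun w => if w ∈ VC then β u₀ else β w) ((G.reweight π).src e)
          - (fun w => if w ∈ VC then β u₀ else β w) ((G.reweight π).tgt e)} := by
    ext x
    constructor
    · rintro ⟨e, hs, ht, rfl⟩
      refine ⟨e, hs, ht, ?_⟩
      show G.cost e + (π (G.src e) + (if G.src e ∈ VC then β u₀ else β (G.src e)))
          - (π (G.tgt e) + (if G.tgt e ∈ VC then β u₀ else β (G.tgt e)))
        = (G.cost e + π (G.src e) - π (G.tgt e))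
          + (if G.src e ∈ VC then β u₀ else β (G.src e))
          - (if G.tgt e ∈ VC then β u₀ else β (G.tgt e))
      ring
    · rintro ⟨e, hs, ht, rfl⟩
      refine ⟨e, hs, ht, ?_⟩
      show (G.cost e + π (G.src e) - π (G.tgt e))
          + (if G.src e ∈ VC then β u₀ else β (G.src e))
          - (if G.tgt e ∈ VC then β u₀ else β (G.tgt e))
        = G.cost e + (π (G.src e) + (if G.src e ∈ VC then β u₀ else β (G.src e)))
          - (π (G.tgt e) + (if G.tgt e ∈ VC then β u₀ else β (G.tgt e)))
      ring
  have hOut : {x | ∃ e, G.src e ∈ S ∧ G.tgt e ∉ S ∧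
      x = G.cost e + (fun w => π w + if w ∈ VC then β u₀ else β w) (G.src e)
        - (fun w => π w + if w ∈ VC then β u₀ else β w) (G.tgt e)}
      = {x | ∃ e, (G.reweight π).src e ∈ S ∧ (G.reweight π).tgt e ∉ S ∧
        x = (G.reweight π).cost e
          + (fun w => if w ∈ VC then β u₀ else β w) ((G.reweight π).src e)
          - (fun w => if w ∈ VC then β u₀ else β w) ((G.reweight π).tgt e)} := by
    ext x
    constructor
    · rintro ⟨e, hs, ht, rfl⟩
      refine ⟨e, hs, ht, ?_⟩
      show G.cost e + (π (G.src e) + (if G.src e ∈ VC then β u₀ else β (G.src e)))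
          - (π (G.tgt e) + (if G.tgt e ∈ VC then β u₀ else β (G.tgt e)))
        = (G.cost e + π (G.src e) - π (G.tgt e))
          + (if G.src e ∈ VC then β u₀ else β (G.src e))
          - (if G.tgt e ∈ VC then β u₀ else β (G.tgt e))
      ring
    · rintro ⟨e, hs, ht, rfl⟩
      refine ⟨e, hs, ht, ?_⟩
      show (G.cost e + π (G.src e) - π (G.tgt e))
          + (if G.src e ∈ VC then β u₀ else β (G.src e))
          - (if G.tgt e ∈ VC then β u₀ else β (G.tgt e))
        = G.cost e + (π (G.src e) + (if G.src e ∈ VC then β u₀ else β (G.src e)))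
          - (π (G.tgt e) + (if G.tgt e ∈ VC then β u₀ else β (G.tgt e)))
      ring
  rw [hIn, hOut]
  exact goal1 S h1 h2
end

section
/- For a uniformly random directed graph with n > 8 vertices and m < n(n−1)/4 edges (each of the n(n−1) possible edges equally likely, chosen without replacement), the number g_d of such graphs with a fixed vertex of degree exactly d satisfies g_d ≤ g_{d−1}·(4m)/(dn). -/
/-- `numGraphs n m d` : the number of directed graphs on `n` labelled vertices with
`m` edges (no self-loops) in which a fixed vertex has degree (in-degree plus
out-degree) exactly `d`. -/
def numGraphs (n m d : ℕ) : ℕ :=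
  Nat.choose (2 * (n - 1)) d * Nat.choose (n * (n - 1) - 2 * (n - 1)) (m - d)

lemma keyineq (n m d : ℕ) (hn : 9 ≤ n) (hm4 : 4 * m < n * (n - 1))
    (hd : 1 ≤ d) (hdm : d ≤ m) :
    n * ((2 * (n - 1) - (d - 1)) * (m - d + 1)) ≤
      4 * m * ((n * (n - 1) - 2 * (n - 1)) - (m - d)) := by
  have h8 : 8 * (n - 1) ≤ n * (n - 1) := Nat.mul_le_mul_right _ (by omega)
  set P := n * (n - 1) with hP
  have hstep : 2 * P ≤ 4 * (P - 2 * (n - 1) - m) := by omega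
  calc n * ((2 * (n - 1) - (d - 1)) * (m - d + 1))
      ≤ n * ((2 * (n - 1)) * m) :=
        Nat.mul_le_mul_left _ (Nat.mul_le_mul (Nat.sub_le _ _) (by omega))
    _ = (2 * P) * m := by rw [hP]; ring
    _ ≤ (4 * (P - 2 * (n - 1) - m)) * m := Nat.mul_le_mul_right _ hstep
    _ ≤ 4 * m * ((P - 2 * (n - 1)) - (m - d)) := by
        have h : P - 2 * (n - 1) - m ≤ (P - 2 * (n - 1)) - (m - d) := by omega
        calc (4 * (P - 2 * (n - 1) - m)) * m
            = 4 * m * (P - 2 * (n - 1) - m) := by ring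
          _ ≤ _ := Nat.mul_le_mul_left _ h

lemma natmain (n m d : ℕ) (hn : 9 ≤ n) (hm4 : 4 * m < n * (n - 1))
    (hd : 1 ≤ d) (hdm : d ≤ m) :
    Nat.choose (2 * (n - 1)) d * Nat.choose (n * (n - 1) - 2 * (n - 1)) (m - d) * (d * n) ≤
      Nat.choose (2 * (n - 1)) (d - 1) *
        Nat.choose (n * (n - 1) - 2 * (n - 1)) (m - d + 1) * (4 * m) := by
  set A := 2 * (n - 1) with hA
  set B := n * (n - 1) - 2 * (n - 1) with hB
  have h8 : 8 * (n - 1) ≤ n * (n - 1) := Nat.mul_le_mul_right _ (by omega)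
  have hmB : m < B := by rw [hB]; omega
  have hE : 0 < B - (m - d) := by omega
  have h1 : Nat.choose A d * d = Nat.choose A (d - 1) * (A - (d - 1)) := by
    have := Nat.choose_succ_right_eq A (d - 1)
    have hdd : d - 1 + 1 = d := by omega
    rwa [hdd] at this
  have h2 : Nat.choose B (m - d + 1) * (m - d + 1) = Nat.choose B (m - d) * (B - (m - d)) :=
    Nat.choose_succ_right_eq B (m - d)
  have key := keyineq n m d hn hm4 hd hdm
  apply Nat.le_of_mul_le_mul_right _ hE
  calc Nat.choose A d * Nat.choose B (m - d) * (d * n) * (B - (m - d))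
      = (Nat.choose A d * d) * (Nat.choose B (m - d) * (B - (m - d))) * n := by ring
    _ = (Nat.choose A (d - 1) * (A - (d - 1))) * (Nat.choose B (m - d + 1) * (m - d + 1)) * n := by
        rw [h1, h2]
    _ = Nat.choose A (d - 1) * Nat.choose B (m - d + 1) *
          (n * ((A - (d - 1)) * (m - d + 1))) := by ring
    _ ≤ Nat.choose A (d - 1) * Nat.choose B (m - d + 1) * (4 * m * (B - (m - d))) :=
        Nat.mul_le_mul_left _ key
    _ = Nat.choose A (d - 1) * Nat.choose B (m - d + 1) * (4 * m) * (B - (m - d)) := by ring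

/-- For `n > 8` and `m < n(n-1)/4`, the count `g_d` of graphs in which
a fixed vertex has degree exactly `d` satisfies `g_d ≤ g_{d-1} · (4m)/(dn)`. -/
theorem stmt16 (n m d : ℕ) (hn : 8 < n) (hm : (m : ℝ) < n * (n - 1) / 4)
    (hd : 1 ≤ d) (hdm : d ≤ m) :
    (numGraphs n m d : ℝ) ≤ (numGraphs n m (d - 1) : ℝ) * (4 * m) / (d * n) := by
  have hn9 : 9 ≤ n := hn
  have hm4 : 4 * m < n * (n - 1) := by
    have hcast : ((n - 1 : ℕ) : ℝ) = (n : ℝ) - 1 := by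
      push_cast [Nat.cast_sub (by omega : 1 ≤ n)]; ring
    have : (4 * m : ℝ) < (n : ℝ) * ((n - 1 : ℕ) : ℝ) := by rw [hcast]; linarith
    exact_mod_cast this
  have hmd : m - (d - 1) = m - d + 1 := by omega
  have key := natmain n m d hn9 hm4 hd hdm
  have hpos : (0 : ℝ) < (d : ℝ) * (n : ℝ) := by
    have : (0:ℝ) < (d:ℝ) := by exact_mod_cast hd
    have h2 : (0:ℝ) < (n:ℝ) := by positivity
    positivity
  rw [le_div_iff₀ hpos]
  unfold numGraphs
  rw [hmd]
  calc ((Nat.choose (2 * (n - 1)) d * Nat.choose (n * (n - 1) - 2 * (n - 1)) (m - d) : ℕ) : ℝ)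
      * ((d : ℝ) * n)
      ≤ ((Nat.choose (2 * (n - 1)) (d - 1) *
          Nat.choose (n * (n - 1) - 2 * (n - 1)) (m - d + 1) : ℕ) : ℝ) * (4 * m) := by
        exact_mod_cast key
    _ = _ := by push_cast; ring
end

section
/- For a uniformly random directed graph with n vertices and m edges, the probability that some vertex has degree greater than 8m/n + 2·log₂ n is less than 2/n. -/
attribute [local instance] Classical.propDecidable

open Finset

/-- The set of all directed graphs (edge sets without self-loops) on vertex set
`Fin n` with exactly `m` edges. -/
noncomputable def randomGraphs (n m : ℕ) : Finset (Finset (Fin n × Fin n)) :=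
  Finset.powersetCard m
    ((Finset.univ : Finset (Fin n × Fin n)).filter fun e => e.1 ≠ e.2)

/-- The degree (in-degree plus out-degree) of vertex `v` in the graph `s`. -/
noncomputable def vdegree {n : ℕ} (s : Finset (Fin n × Fin n)) (v : Fin n) : ℕ :=
  (s.filter fun e => e.1 = v ∨ e.2 = v).card


lemma allE_eq (n : ℕ) :
    ((Finset.univ : Finset (Fin n × Fin n)).filter fun e => e.1 ≠ e.2) =
      (Finset.univ : Finset (Fin n)).offDiag := by
  ext e; simp [Finset.mem_offDiag]

lemma allE_card (n : ℕ) :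
    ((Finset.univ : Finset (Fin n)).offDiag).card = n * (n - 1) := by
  rw [Finset.offDiag_card]
  simp only [Finset.card_univ, Fintype.card_fin]
  cases n with
  | zero => simp
  | succ k => simp [Nat.succ_sub_one]; ring_nf; omega

lemma total_card (n m : ℕ) :
    (Finset.powersetCard m
      ((Finset.univ : Finset (Fin n × Fin n)).filter fun e => e.1 ≠ e.2)).card
      = (n * (n-1)).choose m := by
  rw [Finset.card_powersetCard, allE_eq, allE_card]

lemma Ev_card (n : ℕ) (v : Fin n) :
    ((Finset.univ : Finset (Fin n)).offDiag.filter fun e => e.1 = v ∨ e.2 = v).card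
      = 2 * (n - 1) := by
  rw [Finset.filter_or]
  have hA : ((Finset.univ : Finset (Fin n)).offDiag.filter fun e => e.1 = v)
      = (Finset.univ.erase v).image (fun w => (v, w)) := by
    ext ⟨a, b⟩
    simp [Finset.mem_offDiag]
    aesop
  have hB : ((Finset.univ : Finset (Fin n)).offDiag.filter fun e => e.2 = v)
      = (Finset.univ.erase v).image (fun w => (w, v)) := by
    ext ⟨a, b⟩
    simp [Finset.mem_offDiag]
    aesop
  have hd : Disjoint ((Finset.univ : Finset (Fin n)).offDiag.filter fun e => e.1 = v)
      ((Finset.univ : Finset (Fin n)).offDiag.filter fun e => e.2 = v) := by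
    rw [Finset.disjoint_filter]
    intro e he h1 h2
    simp [Finset.mem_offDiag] at he
    exact he (h1 ▸ h2 ▸ rfl)
  rw [Finset.card_union_of_disjoint hd, hA, hB,
    Finset.card_image_of_injective _ (fun a b h => by simpa using h),
    Finset.card_image_of_injective _ (fun a b h => by simpa using h)]
  rw [Finset.card_erase_of_mem (Finset.mem_univ v)]
  simp [Finset.card_univ]
  omega

lemma count_le (n m d : ℕ) (v : Fin n) (hdm : d ≤ m) :
    (((Finset.univ : Finset (Fin n)).offDiag.powersetCard m).filter
      (fun s => (s.filter fun e => e.1 = v ∨ e.2 = v).card = d)).card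
    ≤ (2 * (n - 1)).choose d * ((n * (n - 1) - 2 * (n - 1)).choose (m - d)) := by
  classical
  set Ev := ((Finset.univ : Finset (Fin n)).offDiag.filter fun e => e.1 = v ∨ e.2 = v)
    with hEv
  set B := (Finset.univ : Finset (Fin n)).offDiag \ Ev with hB
  have hBcard : B.card = n * (n - 1) - 2 * (n - 1) := by
    rw [hB, Finset.card_sdiff_of_subset (Finset.filter_subset _ _), allE_card, Ev_card]
  have key : ∀ s ∈ ((Finset.univ : Finset (Fin n)).offDiag.powersetCard m),
      s ∩ Ev = s.filter fun e => e.1 = v ∨ e.2 = v := by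
    intro s hs
    rw [Finset.mem_powersetCard] at hs
    ext e
    simp only [Finset.mem_inter, Finset.mem_filter, hEv]
    exact ⟨fun ⟨h1, _, h3⟩ => ⟨h1, h3⟩, fun ⟨h1, h2⟩ => ⟨h1, hs.1 h1, h2⟩⟩
  have := Finset.card_le_card_of_injOn
    (f := fun s => (s ∩ Ev, s \ Ev))
    (s := ((Finset.univ : Finset (Fin n)).offDiag.powersetCard m).filter
      (fun s => (s.filter fun e => e.1 = v ∨ e.2 = v).card = d))
    (t := (Ev.powersetCard d) ×ˢ (B.powersetCard (m - d)))
    (by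
      intro s hs
      rw [Finset.mem_coe, Finset.mem_filter] at hs
      obtain ⟨hs1, hs2⟩ := hs
      have hk := key s hs1
      rw [Finset.mem_powersetCard] at hs1
      rw [Finset.mem_coe, Finset.mem_product, Finset.mem_powersetCard, Finset.mem_powersetCard]
      dsimp only
      refine ⟨⟨Finset.inter_subset_right, by rw [hk, hs2]⟩,
        ⟨fun e he => ?_, ?_⟩⟩
      · rw [Finset.mem_sdiff] at he
        exact Finset.mem_sdiff.2 ⟨hs1.1 he.1, he.2⟩
      · have h3 := Finset.card_sdiff_add_card_inter s Ev
        rw [hk, hs2, hs1.2] at h3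
        show (s \ Ev).card = m - d
        omega)
    (by
      intro s hs s' hs' h
      have h1 : s ∩ Ev = s' ∩ Ev := congrArg Prod.fst h
      have h2 : s \ Ev = s' \ Ev := congrArg Prod.snd h
      calc s = s \ Ev ∪ s ∩ Ev := (Finset.sdiff_union_inter s Ev).symm
        _ = s' \ Ev ∪ s' ∩ Ev := by rw [h1, h2]
        _ = s' := Finset.sdiff_union_inter s' Ev)
  calc _ ≤ _ := this
    _ = _ := by
        rw [Finset.card_product, Finset.card_powersetCard, Finset.card_powersetCard,
          Ev_card, hBcard]

lemma vandermonde_le (a b d m : ℕ) (hdm : d ≤ m) :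
    a.choose d * b.choose (m - d) ≤ (a + b).choose m := by
  rw [Nat.add_choose_eq]
  have hmem : (d, m - d) ∈ Finset.HasAntidiagonal.antidiagonal m := by
    rw [Finset.HasAntidiagonal.mem_antidiagonal]; omega
  exact Finset.single_le_sum (f := fun (ij : ℕ × ℕ) => a.choose ij.1 * b.choose ij.2)
    (fun i _ => Nat.zero_le _) hmem

lemma ratio_step (K b m d : ℕ) (hdm : d + 1 ≤ m) (hmb : m ≤ b)
    (harith : 2 * (K - d) * (m - d) ≤ (d + 1) * (b - (m - d - 1))) :
    2 * (K.choose (d + 1) * b.choose (m - (d + 1))) ≤ K.choose d * b.choose (m - d) := by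
  have hpos : 0 < (d + 1) * (b - (m - d - 1)) := by
    have : m - d - 1 < b := by omega
    exact Nat.mul_pos (Nat.succ_pos d) (by omega)
  have A1 : K.choose (d + 1) * (d + 1) = K.choose d * (K - d) :=
    Nat.choose_succ_right_eq K d
  have A2 : b.choose (m - d) * (m - d) = b.choose (m - d - 1) * (b - (m - d - 1)) := by
    have h := Nat.choose_succ_right_eq b (m - d - 1)
    have h1 : m - d - 1 + 1 = m - d := by omega
    rw [h1] at h
    exact h
  have hj : m - (d + 1) = m - d - 1 := by omega
  refine Nat.le_of_mul_le_mul_right ?_ hpos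
  calc 2 * (K.choose (d + 1) * b.choose (m - (d + 1))) * ((d + 1) * (b - (m - d - 1)))
      = 2 * (K.choose (d + 1) * (d + 1)) * (b.choose (m - d - 1) * (b - (m - d - 1))) := by
        rw [hj]; ring
    _ = 2 * (K.choose d * (K - d)) * (b.choose (m - d) * (m - d)) := by rw [A1, ← A2]
    _ = (K.choose d * b.choose (m - d)) * (2 * (K - d) * (m - d)) := by ring
    _ ≤ (K.choose d * b.choose (m - d)) * ((d + 1) * (b - (m - d - 1))) :=
        Nat.mul_le_mul_left _ harith

lemma arith_key (k m d e c : ℕ)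
    (hc : c + d = 2 * (k + 8)) (he : d + 1 + e = m)
    (hm4 : 4 * m ≤ (k + 9) * (k + 8)) (h8 : 8 * m ≤ (d + 1) * (k + 9)) :
    2 * c * (e + 1) ≤ (d + 1) * ((k + 8) * (k + 7) - e) := by
  have hid : 4 * ((k+8)*(k+7)) = (k+9)*(k+8) + (k+8)*(3*k+19) := by ring
  have he4 : 4 * e + (k+8)*(3*k+19) ≤ 4 * ((k+8)*(k+7)) := by nlinarith
  have hele : e ≤ (k+8)*(k+7) := by nlinarith
  set w := (k+8)*(k+7) - e with hw
  have hww : w + e = (k+8)*(k+7) := by omega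
  have h2 : 16 * m * (k+9) ≤ ((d+1) * (3*k+19)) * (k+9) := by nlinarith
  have h2' : 16 * m ≤ (d+1) * (3*k+19) := Nat.le_of_mul_le_mul_right h2 (by omega)
  have h3 : (k+8)*(3*k+19) ≤ 4 * w := by omega
  have h1 : 2 * c * (e+1) ≤ 4 * (k+8) * m := by nlinarith
  have h4 : 16 * (k+8) * m ≤ 4 * ((d+1) * w) := by nlinarith
  calc 2 * c * (e+1) ≤ 4 * (k+8) * m := h1
    _ ≤ (d+1) * w := by nlinarith [h4]

lemma step_main (n m d : ℕ) (hn : 9 ≤ n) (hm4 : 4 * m ≤ n * (n - 1))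
    (h8 : 8 * m ≤ (d + 1) * n) (hdm : d + 1 ≤ m) :
    2 * ((2 * (n - 1)).choose (d + 1) * ((n * (n - 1) - 2 * (n - 1)).choose (m - (d + 1))))
      ≤ (2 * (n - 1)).choose d * ((n * (n - 1) - 2 * (n - 1)).choose (m - d)) := by
  obtain ⟨k, rfl⟩ : ∃ k, n = k + 9 := ⟨n - 9, by omega⟩
  have e2 : (k + 9) * ((k + 9) - 1) - 2 * ((k + 9) - 1) = (k + 8) * (k + 7) := by
    have h : (k + 9) * (k + 8) = (k + 8) * (k + 7) + 2 * (k + 8) := by ring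
    have h1 : (k + 9) - 1 = k + 8 := by omega
    rw [h1, h]
    omega
  have hm4' : 4 * m ≤ (k + 9) * (k + 8) := by
    have h1 : (k + 9) - 1 = k + 8 := by omega
    rwa [h1] at hm4
  have hmb : m ≤ (k + 8) * (k + 7) := by nlinarith
  apply ratio_step _ _ _ _ hdm (by rw [e2]; exact hmb)
  rw [e2]
  have h1 : (k + 9) - 1 = k + 8 := by omega
  rw [h1]
  by_cases hKd : d ≤ 2 * (k + 8)
  · have H := arith_key k m d (m - (d + 1)) (2 * (k + 8) - d) (by omega) (by omega)
      hm4' (by omega)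
    have e1 : m - d = (m - (d + 1)) + 1 := by omega
    have e3 : m - d - 1 = m - (d + 1) := by omega
    rw [e1]
    have e4 : m - (d + 1) + 1 - 1 = m - (d + 1) := by omega
    rw [e4]
    exact H
  · have : 2 * (k + 8) - d = 0 := by omega
    rw [this]
    simp

noncomputable def Gd (n m d : ℕ) : ℕ :=
  (2 * (n - 1)).choose d * ((n * (n - 1) - 2 * (n - 1)).choose (m - d))

lemma G_decay (n m : ℕ) (hn : 9 ≤ n) (hm4 : 4 * m ≤ n * (n - 1)) (base : ℕ)
    (hbase : 8 * m ≤ (base + 1) * n) :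
    ∀ j, base + j ≤ m → (Gd n m (base + j) : ℝ) ≤ (Gd n m base : ℝ) * (1 / 2) ^ j := by
  intro j
  induction j with
  | zero => intro _; simp
  | succ i ih =>
      intro hle
      have hle' : base + i ≤ m := by omega
      have h8 : 8 * m ≤ (base + i + 1) * n := le_trans hbase (by nlinarith)
      have hstep := step_main n m (base + i) hn hm4 h8 (by omega)
      have hstep' : (2 : ℝ) * (Gd n m (base + i + 1) : ℝ) ≤ (Gd n m (base + i) : ℝ) := by
        have := hstep
        unfold Gd
        push_cast
        exact_mod_cast this
      have := ih hle'
      have h2 : (Gd n m (base + (i + 1)) : ℝ) ≤ (Gd n m (base + i) : ℝ) / 2 := by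
        have : base + (i + 1) = base + i + 1 := by omega
        rw [this]
        linarith
      calc (Gd n m (base + (i + 1)) : ℝ) ≤ (Gd n m (base + i) : ℝ) / 2 := h2
        _ ≤ (Gd n m base : ℝ) * (1 / 2) ^ i / 2 := by linarith
        _ = (Gd n m base : ℝ) * (1 / 2) ^ (i + 1) := by ring

lemma geom_Icc (a b : ℕ) : ∑ d ∈ Finset.Icc a b, (1 / 2 : ℝ) ^ (d - a) ≤ 2 := by
  have heq : ∑ d ∈ Finset.Icc a b, (1 / 2 : ℝ) ^ (d - a)
      = ∑ i ∈ Finset.range (b + 1 - a), (1 / 2 : ℝ) ^ i := by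
    apply Finset.sum_nbij' (fun d => d - a) (fun i => a + i)
    · intro d hd
      rw [Finset.mem_Icc] at hd
      rw [Finset.mem_range]
      omega
    · intro i hi
      rw [Finset.mem_range] at hi
      rw [Finset.mem_Icc]
      omega
    · intro d hd
      rw [Finset.mem_Icc] at hd
      omega
    · intro i hi
      omega
    · intro d hd
      rfl
  rw [heq]
  exact sum_geometric_two_le _

lemma per_vertex (n m : ℕ) (v : Fin n) (d0 base : ℕ)
    (hn : 9 ≤ n) (hm4 : 4 * m ≤ n * (n - 1))
    (hbase : 8 * m ≤ (base + 1) * n)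
    (hbd : base ≤ d0)
    (hpow : ((1 : ℝ) / 2) ^ (d0 - base) < 1 / (n : ℝ) ^ 2) :
    (((randomGraphs n m).filter (fun s => d0 ≤ vdegree s v)).card : ℝ) <
      2 / (n : ℝ) ^ 2 * (((n * (n - 1)).choose m : ℕ) : ℝ) := by
  have hmN : m ≤ n * (n - 1) := by nlinarith
  have htotpos : (0 : ℝ) < (((n * (n - 1)).choose m : ℕ) : ℝ) := by
    exact_mod_cast Nat.choose_pos hmN
  have hrg : randomGraphs n m = (Finset.univ : Finset (Fin n)).offDiag.powersetCard m := by
    rw [randomGraphs, allE_eq]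
  by_cases hd0m : d0 ≤ m
  · -- main branch
    -- (i) card ≤ sum of counts
    have hsub : (randomGraphs n m).filter (fun s => d0 ≤ vdegree s v) ⊆
        (Finset.Icc d0 m).biUnion (fun d =>
          (randomGraphs n m).filter (fun s => vdegree s v = d)) := by
      intro s hs
      rw [Finset.mem_filter] at hs
      have hsm : vdegree s v ≤ m := by
        have h1 := hs.1
        rw [hrg, Finset.mem_powersetCard] at h1
        calc vdegree s v ≤ s.card := Finset.card_filter_le _ _
          _ = m := h1.2
      refine Finset.mem_biUnion.2 ⟨vdegree s v, Finset.mem_Icc.2 ⟨hs.2, hsm⟩, ?_⟩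
      exact Finset.mem_filter.2 ⟨hs.1, rfl⟩
    have hcard1 : (((randomGraphs n m).filter (fun s => d0 ≤ vdegree s v)).card : ℝ)
        ≤ ∑ d ∈ Finset.Icc d0 m, ((Gd n m d : ℕ) : ℝ) := by
      have h1 := Finset.card_le_card hsub
      have h2 := Finset.card_biUnion_le (s := Finset.Icc d0 m)
        (t := fun d => (randomGraphs n m).filter (fun s => vdegree s v = d))
      have h3 : ∀ d ∈ Finset.Icc d0 m,
          ((randomGraphs n m).filter (fun s => vdegree s v = d)).card ≤ Gd n m d := by
        intro d hd
        rw [Finset.mem_Icc] at hd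
        have := count_le n m d v hd.2
        rw [hrg]
        unfold vdegree
        unfold Gd
        convert this using 2
      have h4 : ((randomGraphs n m).filter (fun s => d0 ≤ vdegree s v)).card ≤
          ∑ d ∈ Finset.Icc d0 m, Gd n m d :=
        le_trans h1 (le_trans h2 (Finset.sum_le_sum h3))
      exact_mod_cast h4
    -- (ii) each Gd d ≤ Gd d0 * (1/2)^(d-d0)
    have hd0base : 8 * m ≤ (d0 + 1) * n := le_trans hbase (by nlinarith)
    have hdecay2 : ∀ d ∈ Finset.Icc d0 m,
        ((Gd n m d : ℕ) : ℝ) ≤ (Gd n m d0 : ℝ) * (1 / 2) ^ (d - d0) := by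
      intro d hd
      rw [Finset.mem_Icc] at hd
      have := G_decay n m hn hm4 d0 hd0base (d - d0) (by omega)
      have he : d0 + (d - d0) = d := by omega
      rwa [he] at this
    have hsum2 : ∑ d ∈ Finset.Icc d0 m, ((Gd n m d : ℕ) : ℝ)
        ≤ (Gd n m d0 : ℝ) * 2 := by
      calc ∑ d ∈ Finset.Icc d0 m, ((Gd n m d : ℕ) : ℝ)
          ≤ ∑ d ∈ Finset.Icc d0 m, (Gd n m d0 : ℝ) * (1 / 2) ^ (d - d0) :=
            Finset.sum_le_sum hdecay2
        _ = (Gd n m d0 : ℝ) * ∑ d ∈ Finset.Icc d0 m, (1 / 2 : ℝ) ^ (d - d0) := by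
            rw [Finset.mul_sum]
        _ ≤ (Gd n m d0 : ℝ) * 2 := by
            have := geom_Icc d0 m
            have hG0 : (0 : ℝ) ≤ (Gd n m d0 : ℝ) := Nat.cast_nonneg _
            nlinarith
    -- (iii) Gd d0 ≤ total * (1/2)^(d0-base)
    have hGbase : (Gd n m base : ℕ) ≤ (n * (n - 1)).choose m := by
      have h1 : 2 * (n - 1) + (n * (n - 1) - 2 * (n - 1)) = n * (n - 1) := by
        have : 2 * (n - 1) ≤ n * (n - 1) := Nat.mul_le_mul_right _ (by omega)
        omega
      have := vandermonde_le (2 * (n - 1)) (n * (n - 1) - 2 * (n - 1)) base m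
        (le_trans hbd hd0m)
      rwa [h1] at this
    have hGd0 : (Gd n m d0 : ℝ) ≤ (((n * (n - 1)).choose m : ℕ) : ℝ) * (1 / 2) ^ (d0 - base) := by
      have := G_decay n m hn hm4 base hbase (d0 - base) (by omega)
      have he : base + (d0 - base) = d0 := by omega
      rw [he] at this
      calc (Gd n m d0 : ℝ) ≤ (Gd n m base : ℝ) * (1 / 2) ^ (d0 - base) := this
        _ ≤ (((n * (n - 1)).choose m : ℕ) : ℝ) * (1 / 2) ^ (d0 - base) := by
            apply mul_le_mul_of_nonneg_right _ (by positivity)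
            exact_mod_cast hGbase
    -- combine
    calc (((randomGraphs n m).filter (fun s => d0 ≤ vdegree s v)).card : ℝ)
        ≤ (Gd n m d0 : ℝ) * 2 := le_trans hcard1 hsum2
      _ ≤ (((n * (n - 1)).choose m : ℕ) : ℝ) * (1 / 2) ^ (d0 - base) * 2 := by
          apply mul_le_mul_of_nonneg_right hGd0 (by norm_num)
      _ < (((n * (n - 1)).choose m : ℕ) : ℝ) * (1 / (n : ℝ) ^ 2) * 2 := by
          apply mul_lt_mul_of_pos_right _ (by norm_num)
          exact mul_lt_mul_of_pos_left hpow htotpos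
      _ = 2 / (n : ℝ) ^ 2 * (((n * (n - 1)).choose m : ℕ) : ℝ) := by ring
  · -- d0 > m : the filter is empty
    have hempty : (randomGraphs n m).filter (fun s => d0 ≤ vdegree s v) = ∅ := by
      rw [Finset.filter_eq_empty_iff]
      intro s hs
      rw [hrg, Finset.mem_powersetCard] at hs
      have : vdegree s v ≤ m := by
        calc vdegree s v ≤ s.card := Finset.card_filter_le _ _
          _ = m := hs.2
      omega
    rw [hempty]
    simp only [Finset.card_empty, Nat.cast_zero]
    positivity

/-- For a uniformly random directed graph with `n` vertices and `m`
edges, the probability that some vertex has degree greater than `8m/n + 2·log₂ n`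
is less than `2/n` — stated by counting: the number of such graphs is less than
`2/n` times the total number of graphs. -/
theorem stmt17 (n m : ℕ) (hn : 0 < n) (hm : m ≤ n * (n - 1)) :
    (((randomGraphs n m).filter fun s => ∃ v : Fin n,
        (8 * m / n + 2 * Real.logb 2 n : ℝ) < (vdegree s v : ℝ)).card : ℝ) <
      2 / n * ((randomGraphs n m).card : ℝ) := by
  have htot : (randomGraphs n m).card = (n * (n - 1)).choose m := total_card n m
  have htotpos : (0 : ℝ) < ((randomGraphs n m).card : ℝ) := by
    rw [htot]; exact_mod_cast Nat.choose_pos hm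
  have hnR : (0 : ℝ) < (n : ℝ) := by exact_mod_cast hn
  have hrhspos : (0 : ℝ) < 2 / n * ((randomGraphs n m).card : ℝ) := by positivity
  have hlogb : (0 : ℝ) ≤ Real.logb 2 n := Real.logb_nonneg (by norm_num) (by exact_mod_cast hn)
  have hsubE : ∀ s ∈ randomGraphs n m, s ⊆ (Finset.univ : Finset (Fin n)).offDiag := by
    intro s hs
    rw [randomGraphs, allE_eq, Finset.mem_powersetCard] at hs
    exact hs.1
  have hcardm : ∀ s ∈ randomGraphs n m, s.card = m := by
    intro s hs
    rw [randomGraphs, Finset.mem_powersetCard] at hs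
    exact hs.2
  -- trivial cases where the filter is empty
  have hempty : ∀ (H : ∀ s ∈ randomGraphs n m, ∀ v : Fin n,
      (vdegree s v : ℝ) ≤ 8 * m / n + 2 * Real.logb 2 n),
      (((randomGraphs n m).filter fun s => ∃ v : Fin n,
        (8 * m / n + 2 * Real.logb 2 n : ℝ) < (vdegree s v : ℝ)).card : ℝ) <
      2 / n * ((randomGraphs n m).card : ℝ) := by
    intro H
    have : ((randomGraphs n m).filter fun s => ∃ v : Fin n,
        (8 * m / n + 2 * Real.logb 2 n : ℝ) < (vdegree s v : ℝ)) = ∅ := by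
      rw [Finset.filter_eq_empty_iff]
      rintro s hs ⟨v, hv⟩
      exact absurd hv (not_lt.2 (H s hs v))
    rw [this]
    simpa using hrhspos
  by_cases hn8 : n ≤ 8
  · -- small n : degree ≤ m ≤ 8m/n
    apply hempty
    intro s hs v
    have h1 : vdegree s v ≤ m := by
      calc vdegree s v ≤ s.card := Finset.card_filter_le _ _
        _ = m := hcardm s hs
    have h2 : (m : ℝ) ≤ 8 * m / n := by
      rw [le_div_iff₀ hnR]
      have : (m : ℝ) * n ≤ (m : ℝ) * 8 := by
        apply mul_le_mul_of_nonneg_left _ (Nat.cast_nonneg _)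
        exact_mod_cast hn8
      linarith
    have h3 : (vdegree s v : ℝ) ≤ (m : ℝ) := by exact_mod_cast h1
    linarith
  · push_neg at hn8
    have hn9 : 9 ≤ n := hn8
    have h1n : (1 : ℝ) < n := by exact_mod_cast (show 1 < n by omega)
    by_cases hbig : (2 * ((n : ℝ) - 1)) ≤ 8 * m / n + 2 * Real.logb 2 n
    · -- threshold above max degree
      apply hempty
      intro s hs v
      have h1 : vdegree s v ≤ 2 * (n - 1) := by
        unfold vdegree
        calc (s.filter fun e => e.1 = v ∨ e.2 = v).card
            ≤ ((Finset.univ : Finset (Fin n)).offDiag.filter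
                fun e => e.1 = v ∨ e.2 = v).card :=
              Finset.card_le_card (Finset.filter_subset_filter _ (hsubE s hs))
          _ = 2 * (n - 1) := Ev_card n v
      have h2 : (vdegree s v : ℝ) ≤ 2 * ((n : ℝ) - 1) := by
        have : ((2 * (n - 1) : ℕ) : ℝ) = 2 * ((n : ℝ) - 1) := by
          push_cast [Nat.cast_sub (by omega : 1 ≤ n)]
          ring
        rw [← this]
        exact_mod_cast h1
      linarith
    · push_neg at hbig
      by_cases hm0 : m = 0
      · -- no edges : degree 0, threshold > 0
        apply hempty
        intro s hs v
        have h1 : vdegree s v ≤ m := by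
          calc vdegree s v ≤ s.card := Finset.card_filter_le _ _
            _ = m := hcardm s hs
        have hlogpos : (0 : ℝ) < Real.logb 2 n :=
          Real.logb_pos (by norm_num) h1n
        subst hm0
        have : vdegree s v = 0 := by omega
        rw [this]
        push_cast
        positivity
      · -- main case
        have hm1 : 1 ≤ m := by omega
        set x : ℝ := 8 * m / n with hx
        set L : ℝ := Real.logb 2 n with hL
        have hx0 : 0 ≤ x := by positivity
        have hm4 : 4 * m ≤ n * (n - 1) := by
          have h8 : x < 2 * ((n : ℝ) - 1) := by linarith
          rw [hx, div_lt_iff₀ hnR] at h8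
          have : (8 * m : ℝ) < 2 * (n : ℝ) * ((n : ℝ) - 1) := by linarith [h8]
          have h9 : (8 * m : ℝ) < 2 * ((n : ℝ) * ((n : ℝ) - 1)) := by linarith
          have hcast : ((n * (n - 1) : ℕ) : ℝ) = (n : ℝ) * ((n : ℝ) - 1) := by
            push_cast [Nat.cast_sub (by omega : 1 ≤ n)]
            ring
          have : (4 * m : ℝ) < ((n * (n - 1) : ℕ) : ℝ) := by rw [hcast]; linarith
          exact_mod_cast this.le
        set d1 : ℕ := ⌈x⌉₊ with hd1
        have hd1ge1 : 1 ≤ d1 := by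
          rw [hd1]
          apply Nat.one_le_ceil_iff.2
          rw [hx]
          positivity
        set base : ℕ := d1 - 1 with hbase_def
        set d0 : ℕ := ⌊x + 2 * L⌋₊ + 1 with hd0
        have hbase8 : 8 * m ≤ (base + 1) * n := by
          have h1 : base + 1 = d1 := by omega
          rw [h1]
          have h2 : x ≤ (d1 : ℝ) := Nat.le_ceil x
          rw [hx, div_le_iff₀ hnR] at h2
          have h3 : (8 * m : ℝ) ≤ (d1 : ℝ) * n := by linarith
          exact_mod_cast h3
        have hbaseR : ((base : ℕ) : ℝ) < x := by
          have h2 : (d1 : ℝ) < x + 1 := Nat.ceil_lt_add_one hx0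
          have h3 : ((base : ℕ) : ℝ) = (d1 : ℝ) - 1 := by
            rw [hbase_def]
            push_cast [Nat.cast_sub hd1ge1]
            ring
          linarith
        have hd0R : x + 2 * L < (d0 : ℝ) := by
          rw [hd0]
          push_cast
          exact Nat.lt_floor_add_one _
        have hLpos : (0 : ℝ) < L := by
          rw [hL]
          exact Real.logb_pos (by norm_num) h1n
        have hbd : base ≤ d0 := by
          have : ((base : ℕ) : ℝ) < ((d0 : ℕ) : ℝ) := by linarith
          exact_mod_cast this.le
        have hgap : 2 * L < ((d0 - base : ℕ) : ℝ) := by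
          have : ((d0 - base : ℕ) : ℝ) = (d0 : ℝ) - (base : ℝ) := by
            push_cast [Nat.cast_sub hbd]
            ring
          rw [this]
          linarith
        have hpow : ((1 : ℝ) / 2) ^ (d0 - base) < 1 / (n : ℝ) ^ 2 := by
          have hn2 : ((n : ℝ)) ^ 2 = (2 : ℝ) ^ ((2 : ℝ) * L) := by
            rw [mul_comm (2 : ℝ) L, Real.rpow_mul (by norm_num : (0:ℝ) ≤ 2), hL,
              Real.rpow_logb (by norm_num) (by norm_num) hnR,
              show ((2:ℝ)) = ((2:ℕ):ℝ) by norm_num, Real.rpow_natCast]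
          have hlt : (2 : ℝ) ^ ((2 : ℝ) * L) < (2 : ℝ) ^ (((d0 - base : ℕ) : ℝ)) := by
            apply Real.rpow_lt_rpow_left_iff (by norm_num : (1:ℝ) < 2) |>.2
            linarith
          have heq : (2 : ℝ) ^ (((d0 - base : ℕ) : ℝ)) = (2 : ℝ) ^ (d0 - base : ℕ) :=
            Real.rpow_natCast 2 _
          have h2 : (n : ℝ) ^ 2 < (2 : ℝ) ^ (d0 - base : ℕ) := by
            rw [hn2, ← heq]; exact hlt
          rw [div_pow, one_pow, div_lt_div_iff₀ (by positivity) (by positivity)]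
          linarith
        -- union bound
        have hsubU : ((randomGraphs n m).filter fun s => ∃ v : Fin n,
            (8 * m / n + 2 * Real.logb 2 n : ℝ) < (vdegree s v : ℝ)) ⊆
            Finset.univ.biUnion (fun v : Fin n =>
              (randomGraphs n m).filter (fun s => d0 ≤ vdegree s v)) := by
          intro s hs
          rw [Finset.mem_filter] at hs
          obtain ⟨hs1, v, hv⟩ := hs
          refine Finset.mem_biUnion.2 ⟨v, Finset.mem_univ v, Finset.mem_filter.2 ⟨hs1, ?_⟩⟩
          rw [hd0]
          have : x + 2 * L < (vdegree s v : ℝ) := hv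
          have hfl : ⌊x + 2 * L⌋₊ < vdegree s v := by
            rw [Nat.floor_lt (by positivity)]
            exact this
          omega
        have hcardle : (((randomGraphs n m).filter fun s => ∃ v : Fin n,
            (8 * m / n + 2 * Real.logb 2 n : ℝ) < (vdegree s v : ℝ)).card : ℝ)
            ≤ ∑ v : Fin n, (((randomGraphs n m).filter
                (fun s => d0 ≤ vdegree s v)).card : ℝ) := by
          have h1 := Finset.card_le_card hsubU
          have h2 := Finset.card_biUnion_le (s := (Finset.univ : Finset (Fin n)))
            (t := fun v => (randomGraphs n m).filter (fun s => d0 ≤ vdegree s v))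
          have := le_trans h1 h2
          exact_mod_cast this
        have hsumlt : ∑ v : Fin n, (((randomGraphs n m).filter
              (fun s => d0 ≤ vdegree s v)).card : ℝ)
            < ∑ _v : Fin n, 2 / (n : ℝ) ^ 2 * (((n * (n - 1)).choose m : ℕ) : ℝ) := by
          apply Finset.sum_lt_sum_of_nonempty
          · exact Finset.univ_nonempty_iff.2 (by exact Fin.pos_iff_nonempty.1 hn)
          · intro v _
            exact per_vertex n m v d0 base hn9 hm4 hbase8 hbd hpow
        have hfinal : ∑ _v : Fin n, 2 / (n : ℝ) ^ 2 * (((n * (n - 1)).choose m : ℕ) : ℝ)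
            = 2 / n * ((randomGraphs n m).card : ℝ) := by
          rw [Finset.sum_const, Finset.card_univ, Fintype.card_fin, nsmul_eq_mul, htot]
          field_simp
        calc (((randomGraphs n m).filter fun s => ∃ v : Fin n,
            (8 * m / n + 2 * Real.logb 2 n : ℝ) < (vdegree s v : ℝ)).card : ℝ)
            ≤ _ := hcardle
          _ < _ := hsumlt
          _ = _ := hfinal
end
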